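/- arXiv:2110.03600 — 7 statements merged into one kernel-verified Lean document; each statement's English description precedes it below -/
import Mathlib

section
/- Let k ≤ n be positive integers and X a k × n matrix with non-negative real entries. Assume all rows of X have the same sum, each column of X sums to at most 1, and at least k columns each sum to exactly 1. Then there exists an injective function π : [k] → [n] such that x_{j,π(j)} > 0 for all j ∈ [k]. -/
open Finset

/-- The standard simplex Δ^{k-1} ⊆ ℝ^k. -/
def simplex (k : ℕ) : Set (Fin k → ℝ) := stdSimplex ℝ (Fin k)

/-- The face of Δ^{k-1} spanned by the vertices in `S`. -/
def face {k : ℕ} (S : Finset (Fin k)) : Set (Fin k → ℝ) :=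
  {x | x ∈ simplex k ∧ ∀ j ∉ S, x j = 0}

/-- The facet of Δ^{k-1} opposite vertex `j`. -/
def facet {k : ℕ} (j : Fin k) : Set (Fin k → ℝ) := {x | x ∈ simplex k ∧ x j = 0}

/-- A tuple `A` is a KKM cover if every face is covered by the sets indexed by its vertices. -/
def IsKKM {k : ℕ} (A : Fin k → Set (Fin k → ℝ)) : Prop :=
  ∀ S : Finset (Fin k), S.Nonempty → face S ⊆ ⋃ j ∈ S, A j

/-- A tuple `A` is a dual KKM cover of Δ^{k-1}. -/
def IsDualKKM {k : ℕ} (A : Fin k → Set (Fin k → ℝ)) : Prop :=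
  (∀ j, IsClosed (A j) ∧ A j ⊆ simplex k) ∧ (simplex k ⊆ ⋃ j, A j) ∧
    ∀ j j', j ≠ j' → A j ∩ facet j' ⊆ facet j ∩ facet j'


theorem stmt0 (k n : ℕ) (hk : 0 < k) (hkn : k ≤ n) (X : Fin k → Fin n → ℝ)
    (hpos : ∀ j i, 0 ≤ X j i)
    (hrow : ∃ c, ∀ j, ∑ i, X j i = c)
    (hcol : ∀ i, ∑ j, X j i ≤ 1)
    (hones : k ≤ (univ.filter fun i => ∑ j, X j i = 1).card) :
    ∃ π : Fin k → Fin n, Function.Injective π ∧ ∀ j, 0 < X j (π j) := by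
  classical
  obtain ⟨c, hc⟩ := hrow
  set t : Fin k → Finset (Fin n) := fun j => univ.filter fun i => 0 < X j i with ht
  -- total sum = k * c ≥ k, so c ≥ 1
  have htot : (k : ℝ) * c = ∑ i, ∑ j, X j i := by
    rw [Finset.sum_comm]
    simp [hc, mul_comm]
  have hc1 : (1 : ℝ) ≤ c := by
    have hge : (k : ℝ) ≤ ∑ i, ∑ j, X j i := by
      calc (k : ℝ) ≤ ((univ.filter fun i => ∑ j, X j i = 1).card : ℝ) := by
            exact_mod_cast hones
        _ = ∑ i ∈ univ.filter (fun i => ∑ j, X j i = 1), ∑ j, X j i := by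
            rw [Finset.sum_congr rfl (fun i hi => (mem_filter.mp hi).2)]
            simp
        _ ≤ ∑ i, ∑ j, X j i := by
            apply Finset.sum_le_sum_of_subset_of_nonneg (filter_subset _ _)
            intro i _ _
            exact Finset.sum_nonneg fun j _ => hpos j i
    rw [← htot] at hge
    have hkpos : (0 : ℝ) < k := by exact_mod_cast hk
    nlinarith
  have hall : ∀ s : Finset (Fin k), s.card ≤ (s.biUnion t).card := by
    intro s
    have key : (s.card : ℝ) ≤ ((s.biUnion t).card : ℝ) := by
      calc (s.card : ℝ) = ∑ _j ∈ s, (1 : ℝ) := by simp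
        _ ≤ ∑ j ∈ s, c := Finset.sum_le_sum fun j _ => hc1
        _ = ∑ j ∈ s, ∑ i, X j i := by
            exact Finset.sum_congr rfl fun j _ => (hc j).symm
        _ = ∑ i, ∑ j ∈ s, X j i := Finset.sum_comm
        _ = ∑ i ∈ s.biUnion t, ∑ j ∈ s, X j i := by
            refine (Finset.sum_subset (Finset.subset_univ _) ?_).symm
            intro i _ hi
            refine Finset.sum_eq_zero fun j hj => ?_
            by_contra h
            exact hi (Finset.mem_biUnion.mpr ⟨j, hj, by
              simp [ht, lt_of_le_of_ne (hpos j i) (Ne.symm h)]⟩)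
        _ ≤ ∑ _i ∈ s.biUnion t, (1 : ℝ) := by
            refine Finset.sum_le_sum fun i _ => ?_
            exact le_trans (Finset.sum_le_sum_of_subset_of_nonneg
              (Finset.subset_univ s) (fun j _ _ => hpos j i)) (hcol i)
        _ = ((s.biUnion t).card : ℝ) := by simp
    exact_mod_cast key
  obtain ⟨f, hf, hmem⟩ := (Finset.all_card_le_biUnion_card_iff_exists_injective t).mp hall
  exact ⟨f, hf, fun j => by have := hmem j; simpa [ht] using this⟩
end

section
/- Let k ≤ n be positive integers and X a k × n matrix with non-negative real entries such that all rows have the same sum, each column sums to at most 1, and at least k columns sum to exactly 1. If x_{j₀,i₀} > 0 for some j₀ ∈ [k] and i₀ ∈ [n], then there exists an injective function π : [k] → [n] with π(j₀) = i₀ and x_{j,π(j)} > 0 for all j ∈ [k]. -/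
open Finset

theorem stmt1 (k n : ℕ) (hk : 0 < k) (hkn : k ≤ n) (X : Fin k → Fin n → ℝ)
    (hpos : ∀ j i, 0 ≤ X j i)
    (hrow : ∃ c, ∀ j, ∑ i, X j i = c)
    (hcol : ∀ i, ∑ j, X j i ≤ 1)
    (hones : k ≤ (univ.filter fun i => ∑ j, X j i = 1).card)
    (j₀ : Fin k) (i₀ : Fin n) (h₀ : 0 < X j₀ i₀) :
    ∃ π : Fin k → Fin n, Function.Injective π ∧ π j₀ = i₀ ∧ ∀ j, 0 < X j (π j) := by
  classical
  obtain ⟨c, hc⟩ := hrow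
  -- c ≥ 1
  have hc1 : (1:ℝ) ≤ c := by
    have htot : (k:ℝ) * c = ∑ i, ∑ j, X j i := by
      rw [Finset.sum_comm]
      simp [hc, mul_comm]
    have hge : (k:ℝ) ≤ ∑ i, ∑ j, X j i := by
      calc (k:ℝ) ≤ ((univ.filter fun i => ∑ j, X j i = 1).card : ℝ) := by exact_mod_cast hones
        _ = ∑ i ∈ univ.filter (fun i => ∑ j, X j i = 1), (1:ℝ) := by simp
        _ = ∑ i ∈ univ.filter (fun i => ∑ j, X j i = 1), ∑ j, X j i := by
              apply Finset.sum_congr rfl; intro i hi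
              simp only [Finset.mem_filter] at hi
              rw [hi.2]
        _ ≤ ∑ i, ∑ j, X j i := Finset.sum_le_sum_of_subset_of_nonneg (Finset.filter_subset _ _)
              (fun i _ _ => Finset.sum_nonneg fun j _ => hpos j i)
    have hkpos : (0:ℝ) < (k:ℝ) := by exact_mod_cast hk
    nlinarith
  -- Hall system
  set t : {j : Fin k // j ≠ j₀} → Finset (Fin n) :=
    fun j => univ.filter (fun i => i ≠ i₀ ∧ 0 < X j.1 i) with ht
  have hall : ∀ s : Finset {j : Fin k // j ≠ j₀}, s.card ≤ (s.biUnion t).card := by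
    intro s
    set S := s.image (fun j => j.1) with hS
    have hScard : S.card = s.card := Finset.card_image_of_injective _ Subtype.val_injective
    set N := s.biUnion t with hN
    have hj₀S : j₀ ∉ S := by
      simp only [hS, Finset.mem_image]
      rintro ⟨j, _, hj⟩; exact j.2 hj
    have hi₀N : i₀ ∉ N := by
      simp only [hN, Finset.mem_biUnion, ht, Finset.mem_filter]
      rintro ⟨j, _, _, hne, _⟩; exact hne rfl
    have key : (S.card : ℝ) * c ≤ N.card + (1 - X j₀ i₀) := by
      have h1 : (S.card : ℝ) * c = ∑ i, ∑ j ∈ S, X j i := by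
        rw [Finset.sum_comm]
        rw [Finset.sum_congr rfl (fun j _ => hc j)]
        simp [mul_comm]
      have hsplit : ∑ i, ∑ j ∈ S, X j i
          = ∑ i ∈ N, ∑ j ∈ S, X j i + ∑ i ∈ univ \ N, ∑ j ∈ S, X j i := by
        rw [← Finset.sum_union (Finset.disjoint_sdiff)]
        congr 1
        rw [Finset.union_sdiff_of_subset (Finset.subset_univ _)]
      have hfirst : ∑ i ∈ N, ∑ j ∈ S, X j i ≤ (N.card : ℝ) := by
        calc ∑ i ∈ N, ∑ j ∈ S, X j i ≤ ∑ i ∈ N, (1:ℝ) := by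
              apply Finset.sum_le_sum
              intro i _
              calc ∑ j ∈ S, X j i ≤ ∑ j, X j i :=
                    Finset.sum_le_sum_of_subset_of_nonneg (Finset.subset_univ _)
                      (fun j _ _ => hpos j i)
                _ ≤ 1 := hcol i
          _ = N.card := by simp
      have hsecond : ∑ i ∈ univ \ N, ∑ j ∈ S, X j i ≤ 1 - X j₀ i₀ := by
        have hzero : ∀ i ∈ univ \ N, i ≠ i₀ → ∑ j ∈ S, X j i = 0 := by
          intro i hi hne
          apply Finset.sum_eq_zero
          intro j hj
          by_contra hx
          have hx' : 0 < X j i := lt_of_le_of_ne (hpos j i) (Ne.symm hx)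
          simp only [Finset.mem_sdiff, Finset.mem_univ, true_and] at hi
          apply hi
          simp only [hS, Finset.mem_image] at hj
          obtain ⟨j', hj's, hjj'⟩ := hj
          simp only [hN, Finset.mem_biUnion]
          exact ⟨j', hj's, by simp [ht, hjj', hne, hx']⟩
        have heq : ∑ i ∈ univ \ N, ∑ j ∈ S, X j i = ∑ j ∈ S, X j i₀ := by
          rw [Finset.sum_eq_single i₀]
          · intro b hb hne; exact hzero b hb hne
          · intro h
            exact absurd (Finset.mem_sdiff.mpr ⟨Finset.mem_univ _, hi₀N⟩) h
        rw [heq]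
        have : ∑ j ∈ S, X j i₀ + X j₀ i₀ ≤ 1 := by
          calc ∑ j ∈ S, X j i₀ + X j₀ i₀ = ∑ j ∈ insert j₀ S, X j i₀ := by
                rw [Finset.sum_insert hj₀S]; ring
            _ ≤ ∑ j, X j i₀ :=
                Finset.sum_le_sum_of_subset_of_nonneg (Finset.subset_univ _)
                  (fun j _ _ => hpos j i₀)
            _ ≤ 1 := hcol i₀
        linarith
      rw [h1, hsplit]
      linarith
    have hlt : (S.card : ℝ) < N.card + 1 := by
      have : (S.card : ℝ) * 1 ≤ (S.card : ℝ) * c :=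
        mul_le_mul_of_nonneg_left hc1 (by positivity)
      nlinarith
    have hnat : S.card < N.card + 1 := by exact_mod_cast hlt
    omega
  obtain ⟨f, hfinj, hf⟩ := (Finset.all_card_le_biUnion_card_iff_exists_injective t).mp hall
  refine ⟨fun j => if h : j = j₀ then i₀ else f ⟨j, h⟩, ?_, by simp, ?_⟩
  · intro a b hab
    by_cases ha : a = j₀ <;> by_cases hb : b = j₀
    · rw [ha, hb]
    · exfalso
      simp only [ha, dif_pos, dif_neg hb] at hab
      have := hf ⟨b, hb⟩
      simp only [ht, Finset.mem_filter] at this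
      exact this.2.1 hab.symm
    · exfalso
      simp only [hb, dif_pos, dif_neg ha] at hab
      have := hf ⟨a, ha⟩
      simp only [ht, Finset.mem_filter] at this
      exact this.2.1 hab
    · simp only [dif_neg ha, dif_neg hb] at hab
      have := hfinj hab
      exact congrArg Subtype.val this
  · intro j
    by_cases h : j = j₀
    · subst h; simpa using h₀
    · simp only [dif_neg h]
      have := hf ⟨j, h⟩
      simp only [ht, Finset.mem_filter] at this
      exact this.2.2
end

section
/- Let k ≤ r ≤ n be positive integers and X a k × n matrix with non-negative entries such that all rows have the same sum, every column sums to at most 1, and at least r columns sum to exactly 1. Then for every subset C ⊆ [n] with |C| = ⌈(r−k)/k⌉ there exists an injective function π : [k] → [n] \ C such that x_{j,π(j)} > 0 for all j ∈ [k]. -/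
open Finset

theorem stmt2 (k r n : ℕ) (hk : 0 < k) (hkr : k ≤ r) (hrn : r ≤ n)
    (X : Fin k → Fin n → ℝ)
    (hpos : ∀ j i, 0 ≤ X j i)
    (hrow : ∃ c, ∀ j, ∑ i, X j i = c)
    (hcol : ∀ i, ∑ j, X j i ≤ 1)
    (hones : r ≤ (univ.filter fun i => ∑ j, X j i = 1).card)
    (C : Finset (Fin n)) (hC : C.card = ⌈((r : ℚ) - k) / k⌉) :
    ∃ π : Fin k → Fin n, Function.Injective π ∧ ∀ j, π j ∉ C ∧ 0 < X j (π j) := by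
    classical
  obtain ⟨c, hrow⟩ := hrow
  set t : Fin k → Finset (Fin n) := fun j => univ.filter (fun i => i ∉ C ∧ 0 < X j i) with ht
  have key : ∀ s : Finset (Fin k), s.card ≤ (s.biUnion t).card := by
    intro s
    rcases s.eq_empty_or_nonempty with rfl | hs
    · simp
    set N : Finset (Fin n) := univ.filter (fun i => ∃ j ∈ s, 0 < X j i) with hN
    have hm1 : 1 ≤ s.card := hs.card_pos
    have hkR : (0:ℝ) < (k:ℝ) := by exact_mod_cast hk
    have hkc : (r:ℝ) ≤ k * c := by
      calc (r:ℝ) ≤ ((univ.filter fun i => ∑ j, X j i = 1).card : ℝ) := by exact_mod_cast hones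
        _ = ∑ _i ∈ univ.filter (fun i => ∑ j, X j i = 1), (1:ℝ) := by simp
        _ = ∑ i ∈ univ.filter (fun i => ∑ j, X j i = 1), ∑ j, X j i := by
              apply Finset.sum_congr rfl; intro i hi
              simp only [mem_filter] at hi; rw [hi.2]
        _ ≤ ∑ i, ∑ j, X j i := Finset.sum_le_sum_of_subset_of_nonneg (filter_subset _ _)
              (by intro i _ _; exact Finset.sum_nonneg fun j _ => hpos j i)
        _ = ∑ j, ∑ i, X j i := Finset.sum_comm
        _ = ∑ _j : Fin k, c := by simp [hrow]
        _ = k * c := by simp [mul_comm]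
    have hsN : (s.card : ℝ) * c ≤ N.card := by
      calc (s.card:ℝ) * c = ∑ j ∈ s, ∑ i, X j i := by simp [hrow, mul_comm]
        _ = ∑ i, ∑ j ∈ s, X j i := Finset.sum_comm
        _ = ∑ i ∈ N, ∑ j ∈ s, X j i := by
            symm; apply Finset.sum_subset (filter_subset _ _)
            intro i _ hi
            simp only [hN, mem_filter, mem_univ, true_and, not_exists] at hi
            apply Finset.sum_eq_zero
            intro j hj
            have h1 : ¬ 0 < X j i := fun h => hi j ⟨hj, h⟩
            have h2 := hpos j i
            linarith
        _ ≤ ∑ i ∈ N, ∑ j, X j i := by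
            apply Finset.sum_le_sum; intro i _
            exact Finset.sum_le_sum_of_subset_of_nonneg (subset_univ s) (fun j _ _ => hpos j i)
        _ ≤ ∑ _i ∈ N, (1:ℝ) := Finset.sum_le_sum (fun i _ => hcol i)
        _ = N.card := by simp
    have hmain : ((s.card:ℝ) * r) / k ≤ (N.card:ℝ) := by
      rw [div_le_iff₀ hkR]
      have h1 : (s.card:ℝ) * r ≤ s.card * (k * c) :=
        mul_le_mul_of_nonneg_left hkc (by positivity)
      nlinarith
    have hQ : ((s.card:ℚ) * r) / k ≤ (N.card:ℚ) := by
      rw [← Rat.cast_le (K := ℝ)]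
      push_cast
      exact hmain
    have hZ : ⌈((s.card:ℚ) * r) / k⌉ ≤ (N.card:ℤ) := by
      rw [Int.ceil_le]; exact_mod_cast hQ
    have hkQ : (0:ℚ) < (k:ℚ) := by exact_mod_cast hk
    have hsplit : ((s.card:ℚ) * r) / k = ((s.card:ℚ) * ((r:ℚ) - k)) / k + (s.card:ℕ) := by
      field_simp
      ring
    have hq0 : (0:ℚ) ≤ ((r:ℚ) - k) / k := by
      apply div_nonneg _ (le_of_lt hkQ)
      have : (k:ℚ) ≤ r := by exact_mod_cast hkr
      linarith
    have hmono : ⌈((r:ℚ) - k) / k⌉ ≤ ⌈((s.card:ℚ) * ((r:ℚ) - k)) / k⌉ := by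
      apply Int.ceil_mono
      rw [mul_div_assoc]
      exact le_mul_of_one_le_left hq0 (by exact_mod_cast hm1)
    have hZ2 : (s.card : ℤ) + (C.card : ℤ) ≤ (N.card : ℤ) := by
      rw [hC]
      calc (s.card : ℤ) + ⌈((r:ℚ) - k) / k⌉
          ≤ (s.card : ℤ) + ⌈((s.card:ℚ) * ((r:ℚ) - k)) / k⌉ := by linarith
        _ = ⌈((s.card:ℚ) * r) / k⌉ := by
            rw [hsplit, Int.ceil_add_natCast]; ring
        _ ≤ (N.card : ℤ) := hZ
    have hNat : s.card + C.card ≤ N.card := by exact_mod_cast hZ2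
    have hsub : N \ C ⊆ s.biUnion t := by
      intro i hi
      rw [mem_sdiff] at hi
      obtain ⟨hiN, hiC⟩ := hi
      simp only [hN, mem_filter, mem_univ, true_and] at hiN
      obtain ⟨j, hjs, hji⟩ := hiN
      rw [mem_biUnion]
      exact ⟨j, hjs, by simp [ht, hiC, hji]⟩
    calc s.card ≤ N.card - C.card := by omega
      _ ≤ (N \ C).card := le_card_sdiff _ _
      _ ≤ (s.biUnion t).card := card_le_card hsub
  obtain ⟨f, hf, hft⟩ := (Finset.all_card_le_biUnion_card_iff_exists_injective t).mp key
  refine ⟨f, hf, fun j => ?_⟩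
  have := hft j
  simp only [ht, mem_filter, mem_univ, true_and] at this
  exact this
end

section
/- Let G be a bipartite graph between a set R of size k and a set [n] of columns, where j is adjacent to i iff x_{j,i} > 0 for a k × n matrix X with non-negative entries, constant row sums, column sums at most 1, and at least r columns summing to 1 (k ≤ r ≤ n). Then for every nonempty subset S of the rows, |N(S)| ≥ |S| + ⌈(r−k)/k⌉, where N(S) is the set of columns adjacent to some row in S. -/
open Finset

theorem stmt3 (k r n : ℕ) (hk : 0 < k) (hkr : k ≤ r) (hrn : r ≤ n)
    (X : Fin k → Fin n → ℝ)
    (hpos : ∀ j i, 0 ≤ X j i)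
    (hrow : ∃ c, ∀ j, ∑ i, X j i = c)
    (hcol : ∀ i, ∑ j, X j i ≤ 1)
    (hones : r ≤ (univ.filter fun i => ∑ j, X j i = 1).card)
    (S : Finset (Fin k)) (hS : S.Nonempty) :
    (S.card : ℤ) + ⌈((r : ℚ) - k) / k⌉ ≤
      ((univ.filter fun i : Fin n => ∃ j ∈ S, 0 < X j i).card : ℤ) := by
  obtain ⟨c, hc⟩ := hrow
  set T := univ.filter fun i : Fin n => ∃ j ∈ S, 0 < X j i with hT
  -- total sum equals k * c
  have htot : ∑ i, ∑ j, X j i = (k : ℝ) * c := by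
    rw [Finset.sum_comm]
    simp [hc, Finset.sum_const, mul_comm]
  -- r ≤ k * c
  have hones' : ((univ.filter fun i => ∑ j, X j i = 1).card : ℝ) ≤ ∑ i, ∑ j, X j i := by
    calc ((univ.filter fun i => ∑ j, X j i = 1).card : ℝ)
        = ∑ i ∈ univ.filter fun i => ∑ j, X j i = 1, ∑ j, X j i := by
          rw [Finset.sum_congr rfl (fun i hi => (Finset.mem_filter.mp hi).2)]
          simp
      _ ≤ ∑ i, ∑ j, X j i := by
          apply Finset.sum_le_sum_of_subset_of_nonneg (Finset.filter_subset _ _)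
          intro i _ _
          exact Finset.sum_nonneg fun j _ => hpos j i
  have hrkc : (r : ℝ) ≤ (k : ℝ) * c := by
    have : (r : ℝ) ≤ ((univ.filter fun i => ∑ j, X j i = 1).card : ℝ) := by
      exact_mod_cast hones
    linarith [htot ▸ hones']
  have hk' : (1 : ℝ) ≤ (k : ℝ) := by exact_mod_cast hk
  have hc1 : (1 : ℝ) ≤ c := by
    have hr' : (k : ℝ) ≤ (r : ℝ) := by exact_mod_cast hkr
    nlinarith
  -- S.card * c ≤ T.card
  have e1 : (S.card : ℝ) * c = ∑ i, ∑ j ∈ S, X j i := by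
    rw [Finset.sum_comm]
    simp [hc, Finset.sum_const, mul_comm]
  have e2 : ∑ i, ∑ j ∈ S, X j i = ∑ i ∈ T, ∑ j ∈ S, X j i := by
    symm
    apply Finset.sum_subset (Finset.subset_univ T)
    intro i _ hiT
    apply Finset.sum_eq_zero
    intro j hj
    by_contra h
    exact hiT (Finset.mem_filter.mpr ⟨Finset.mem_univ i,
      ⟨j, hj, lt_of_le_of_ne (hpos j i) (Ne.symm h)⟩⟩)
  have e3 : ∑ i ∈ T, ∑ j ∈ S, X j i ≤ (T.card : ℝ) := by
    calc ∑ i ∈ T, ∑ j ∈ S, X j i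
        ≤ ∑ i ∈ T, (1 : ℝ) := by
          apply Finset.sum_le_sum
          intro i _
          calc ∑ j ∈ S, X j i ≤ ∑ j, X j i :=
                Finset.sum_le_sum_of_subset_of_nonneg (Finset.subset_univ S)
                  (fun j _ _ => hpos j i)
            _ ≤ 1 := hcol i
      _ = (T.card : ℝ) := by simp
  have hsc : (S.card : ℝ) * c ≤ (T.card : ℝ) := by rw [e1, e2]; exact e3
  have hs1 : (1 : ℝ) ≤ (S.card : ℝ) := by
    exact_mod_cast Nat.one_le_iff_ne_zero.mpr (Finset.card_ne_zero_of_mem hS.choose_spec)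
  -- real inequality
  have h1 : c ≤ (T.card : ℝ) - S.card + 1 := by
    nlinarith [mul_nonneg (sub_nonneg.mpr hs1) (sub_nonneg.mpr hc1)]
  have hr : (r : ℝ) - k ≤ ((T.card : ℝ) - S.card) * k := by
    nlinarith [mul_le_mul_of_nonneg_right h1 (by positivity : (0:ℝ) ≤ (k:ℝ))]
  have hq : ((r : ℚ) - k) / k ≤ (((T.card : ℤ) - S.card : ℤ) : ℚ) := by
    rw [div_le_iff₀ (by exact_mod_cast hk : (0:ℚ) < (k:ℚ))]
    rw [← Rat.cast_le (K := ℝ)]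
    push_cast
    linarith
  have := Int.ceil_le.mpr hq
  omega
end

section
/- Colorful KKM theorem (Gale): if for each i ∈ [k], (A^i_1, …, A^i_k) is a KKM cover of Δ^{k−1} by closed sets, then there exists a permutation π of [k] such that ⋂_{j=1}^k A^{π(j)}_j ≠ ∅. -/
namespace CKKM

/-! ### Flags -/

def IsFlag {α : Type*} (d : Finset α) (c : Finset (Finset α)) : Prop :=
  c.card = d.card ∧ (∀ F ∈ c, F ⊆ d ∧ F.Nonempty) ∧ (∀ F ∈ c, ∀ G ∈ c, F ⊆ G ∨ G ⊆ F)

namespace IsFlag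
variable {α : Type*} {d : Finset α} {c : Finset (Finset α)}

theorem subset_of_card_le (h : IsFlag d c) {F G : Finset α} (hF : F ∈ c) (hG : G ∈ c)
    (hc : F.card ≤ G.card) : F ⊆ G := by
  rcases h.2.2 F hF G hG with h' | h'
  · exact h'
  · exact (Finset.eq_of_subset_of_card_le h' hc).ge

theorem eq_of_card (h : IsFlag d c) {F G : Finset α} (hF : F ∈ c) (hG : G ∈ c)
    (hc : F.card = G.card) : F = G :=
  Finset.Subset.antisymm (h.subset_of_card_le hF hG hc.le) (h.subset_of_card_le hG hF hc.ge)

theorem card_mem_Icc (h : IsFlag d c) {F : Finset α} (hF : F ∈ c) :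
    F.card ∈ Finset.Icc 1 d.card := by
  rcases h.2.1 F hF with ⟨h1, h2⟩
  exact Finset.mem_Icc.2 ⟨Finset.card_pos.2 h2, Finset.card_le_card h1⟩

theorem image_card (h : IsFlag d c) : c.image Finset.card = Finset.Icc 1 d.card := by
  have hinj : Set.InjOn Finset.card ↑c := fun F hF G hG => h.eq_of_card hF hG
  have h1 : (c.image Finset.card).card = d.card := by
    rw [Finset.card_image_of_injOn hinj, h.1]
  refine Finset.eq_of_subset_of_card_le (fun j hj => ?_) ?_
  · rcases Finset.mem_image.1 hj with ⟨F, hF, rfl⟩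
    exact h.card_mem_Icc hF
  · rw [h1, Nat.card_Icc]; simp

theorem exists_card (h : IsFlag d c) {j : ℕ} (h1 : 1 ≤ j) (h2 : j ≤ d.card) :
    ∃ F ∈ c, F.card = j := by
  have : j ∈ c.image Finset.card := by
    rw [h.image_card]; exact Finset.mem_Icc.2 ⟨h1, h2⟩
  simpa using Finset.mem_image.1 this

theorem top_mem (h : IsFlag d c) (hd : d.Nonempty) : d ∈ c := by
  obtain ⟨F, hF, hFc⟩ := h.exists_card (Finset.card_pos.2 hd) le_rfl
  rwa [Finset.eq_of_subset_of_card_le (h.2.1 F hF).1 hFc.ge] at hF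

end IsFlag

/-! ### The iterated barycentric subdivision of the faces of the simplex -/

def Vt (k : ℕ) : ℕ → Type
  | 0 => Fin k
  | (N+1) => Finset (Vt k N)

attribute [reducible] Vt

instance VtDecEq (k : ℕ) : ∀ N, DecidableEq (Vt k N)
  | 0 => inferInstanceAs (DecidableEq (Fin k))
  | (N+1) => @Finset.decidableEq _ (VtDecEq k N)

noncomputable instance VtFintype (k : ℕ) : ∀ N, Fintype (Vt k N)
  | 0 => inferInstanceAs (Fintype (Fin k))
  | (N+1) => @Finset.fintype _ (VtFintype k N)

noncomputable def posi (k : ℕ) : ∀ N, Vt k N → (Fin k → ℝ)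
  | 0, j => fun j' => if j' = j then 1 else 0
  | (N+1), T => (T.card : ℝ)⁻¹ • (∑ v ∈ T, posi k N v)

noncomputable def suppV (k : ℕ) : ∀ N, Vt k N → Finset (Fin k)
  | 0, j => {j}
  | (N+1), T => T.sup (suppV k N)

def IsCell (k : ℕ) : ∀ N, Finset (Fin k) → Finset (Vt k N) → Prop
  | 0, S, c => c = S
  | (N+1), S, c => ∃ d : Finset (Vt k N), IsCell k N S d ∧ IsFlag d c

variable {k : ℕ}

theorem posi_zero (j : Fin k) : posi k 0 j = fun j' => if j' = j then 1 else 0 := rfl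
theorem posi_succ {N : ℕ} (T : Finset (Vt k N)) :
    posi k (N+1) T = (T.card : ℝ)⁻¹ • (∑ v ∈ T, posi k N v) := rfl
theorem suppV_zero (j : Fin k) : suppV k 0 j = {j} := rfl
theorem suppV_succ {N : ℕ} (T : Finset (Vt k N)) : suppV k (N+1) T = T.sup (suppV k N) := rfl
theorem isCell_zero {S : Finset (Fin k)} {c : Finset (Vt k 0)} : IsCell k 0 S c ↔ c = S := Iff.rfl
theorem isCell_succ {N : ℕ} {S : Finset (Fin k)} {c : Finset (Finset (Vt k N))} :
    IsCell k (N+1) S c ↔ ∃ d : Finset (Vt k N), IsCell k N S d ∧ IsFlag d c := Iff.rfl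

theorem suppV0_sup (t : Finset (Fin k)) : t.sup (suppV k 0) = t := by
  ext j; simp [suppV_zero, Finset.mem_sup]

/-! ### Basic structure of cells -/

def CellProp (N : ℕ) (S : Finset (Fin k)) (c : Finset (Vt k N)) : Prop :=
  c.card = S.card ∧ c.sup (suppV k N) = S ∧
    ∀ v ∈ c, (suppV k N v).Nonempty ∧ (∀ j, 0 ≤ posi k N v j) ∧
      (∑ j, posi k N v j) = 1 ∧ ∀ j ∉ suppV k N v, posi k N v j = 0

theorem cell_struct_succ {N : ℕ} {S : Finset (Fin k)} (c : Finset (Finset (Vt k N)))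
    (hc : IsCell k (N+1) S c)
    (IH : ∀ (S' : Finset (Fin k)) (c' : Finset (Vt k N)), IsCell k N S' c' → CellProp N S' c') :
    CellProp (N+1) S c := by
  obtain ⟨d, hd, hf⟩ := isCell_succ.1 hc
  obtain ⟨hcard, hsup, hvert⟩ := IH S d hd
  have hsub := hf.2.1
  refine ⟨by rw [hf.1, hcard], ?_, ?_⟩
  · apply le_antisymm
    · refine Finset.sup_le fun F hF => ?_
      rw [suppV_succ]
      calc F.sup (suppV k N) ≤ d.sup (suppV k N) := Finset.sup_mono (hsub F hF).1
      _ = S := hsup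
    · rcases Finset.eq_empty_or_nonempty d with rfl | hdne
      · have : S = ∅ := by rw [← hsup]; simp
        simp [this]
      · have hdm : d ∈ c := hf.top_mem hdne
        rw [← hsup]
        exact Finset.le_sup (f := suppV k (N+1)) hdm
  · suffices key : ∀ T : Finset (Vt k N), T ∈ c → (suppV k (N+1) T).Nonempty ∧
        (∀ j, 0 ≤ posi k (N+1) T j) ∧ (∑ j, posi k (N+1) T j) = 1 ∧
        ∀ j ∉ suppV k (N+1) T, posi k (N+1) T j = 0 by
      exact fun T hT => key T hT
    intro T hT
    obtain ⟨hTd, hTne⟩ := hsub T hT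
    obtain ⟨w, hw⟩ := hTne
    have hIH : ∀ v ∈ T, (suppV k N v).Nonempty ∧ (∀ j, 0 ≤ posi k N v j) ∧
        (∑ j, posi k N v j) = 1 ∧ ∀ j ∉ suppV k N v, posi k N v j = 0 :=
      fun v hv => hvert v (hTd hv)
    have hTcard : (0:ℝ) < (T.card : ℝ) := by
      exact_mod_cast Finset.card_pos.2 ⟨w, hw⟩
    rw [suppV_succ, posi_succ]
    refine ⟨?_, ?_, ?_, ?_⟩
    · obtain ⟨j, hj⟩ := (hIH w hw).1
      exact ⟨j, Finset.mem_sup.2 ⟨w, hw, hj⟩⟩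
    · intro j
      simp only [Pi.smul_apply, Finset.sum_apply, smul_eq_mul]
      have : 0 ≤ ∑ v ∈ T, posi k N v j :=
        Finset.sum_nonneg fun v hv => (hIH v hv).2.1 j
      positivity
    · simp only [Pi.smul_apply, Finset.sum_apply, smul_eq_mul]
      rw [← Finset.mul_sum, Finset.sum_comm]
      rw [Finset.sum_congr rfl fun v hv => (hIH v hv).2.2.1]
      simp only [Finset.sum_const, nsmul_eq_mul, mul_one]
      field_simp
    · intro j hj
      simp only [Pi.smul_apply, Finset.sum_apply, smul_eq_mul]
      have : ∀ v ∈ T, posi k N v j = 0 := by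
        intro v hv
        refine (hIH v hv).2.2.2 j fun hjv => hj ?_
        exact Finset.mem_sup.2 ⟨v, hv, hjv⟩
      rw [Finset.sum_congr rfl this]
      simp

theorem cell_struct : ∀ (N : ℕ) (S : Finset (Fin k)) (c : Finset (Vt k N)),
    IsCell k N S c → CellProp N S c
  | 0, S, c, hc => by
    subst hc
    refine ⟨rfl, suppV0_sup _, fun v hv => ?_⟩
    refine ⟨by simp [suppV_zero], fun j => by rw [posi_zero]; positivity,
      by simp [posi_zero], fun j hj => ?_⟩
    simp only [suppV_zero, Finset.mem_singleton] at hj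
    simp [posi_zero, hj]
  | (N+1), S, c, hc => cell_struct_succ c hc (cell_struct N)

theorem isCell_empty : ∀ N, IsCell k N ∅ (∅ : Finset (Vt k N))
  | 0 => rfl
  | (N+1) => ⟨∅, isCell_empty N, by simp [IsFlag]⟩

def iterCell (k : ℕ) : ∀ N, Fin k → Finset (Vt k N)
  | 0, j => {j}
  | (N+1), j => {iterCell k N j}

theorem isCell_singleton : ∀ (N : ℕ) (j : Fin k) (c : Finset (Vt k N)),
    IsCell k N {j} c ↔ c = iterCell k N j
  | 0, j, c => by rw [isCell_zero]; exact Iff.rfl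
  | (N+1), j, c => by
    rw [isCell_succ]
    constructor
    · rintro ⟨d, hd, hf⟩
      have hd' : d = iterCell k N j := (isCell_singleton N j d).1 hd
      subst hd'
      have hdcard : (iterCell k N j).card = 1 := by
        have := (cell_struct N {j} (iterCell k N j) ((isCell_singleton N j _).2 rfl)).1
        simpa using this
      have hccard : c.card = 1 := by rw [hf.1, hdcard]
      obtain ⟨F, hF⟩ := Finset.card_eq_one.1 hccard
      have hFm : F ∈ c := by rw [hF]; exact Finset.mem_singleton_self F
      have : F = iterCell k N j := by
        refine Finset.eq_of_subset_of_card_le (hf.2.1 F hFm).1 ?_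
        rw [hdcard]
        exact Finset.card_pos.2 (hf.2.1 F hFm).2
      rw [iterCell, hF, this]
    · rintro rfl
      refine ⟨iterCell k N j, (isCell_singleton N j _).2 rfl, ?_⟩
      have hdcard : (iterCell k N j).card = 1 := by
        have := (cell_struct N {j} (iterCell k N j) ((isCell_singleton N j _).2 rfl)).1
        simpa using this
      refine ⟨by simp [iterCell, hdcard], ?_, ?_⟩
      · intro F hF
        simp only [iterCell, Finset.mem_singleton] at hF
        subst hF
        exact ⟨le_rfl, Finset.card_pos.1 (by rw [hdcard]; norm_num)⟩
      · intro F hF G hG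
        simp only [iterCell, Finset.mem_singleton] at hF hG
        subst hF; subst hG; left; rfl

/-! ### Counting cells containing a facet -/

noncomputable def cellsWith (k N : ℕ) (S : Finset (Fin k)) (f : Finset (Vt k N)) :
    Finset (Finset (Vt k N)) :=
  @Finset.filter _ (fun c => IsCell k N S c ∧ f ⊆ c) (Classical.decPred _) Finset.univ

theorem mem_cellsWith {N : ℕ} {S : Finset (Fin k)} {f c : Finset (Vt k N)} :
    c ∈ cellsWith k N S f ↔ IsCell k N S c ∧ f ⊆ c := by
  simp [cellsWith]

theorem cellsWith_empty_singleton (N : ℕ) (j : Fin k) :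
    (cellsWith k N {j} ∅).card = 1 := by
  have : cellsWith k N {j} ∅ = {iterCell k N j} := by
    ext c
    simp only [mem_cellsWith, Finset.empty_subset, and_true, Finset.mem_singleton]
    exact isCell_singleton N j c
  rw [this, Finset.card_singleton]

theorem bridge {N : ℕ} {S : Finset (Fin k)} (hS2 : 2 ≤ S.card) {e : Finset (Vt k N)}
    (hecard : e.card + 1 = S.card) {f : Finset (Finset (Vt k N))} (hff : IsFlag e f) :
    (cellsWith k (N+1) S f).card = (cellsWith k N S e).card := by
  have hene : e.Nonempty := Finset.card_pos.1 (by omega)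
  have hef : e ∈ f := hff.top_mem hene
  have hfsub : ∀ F ∈ f, F ⊆ e := fun F hF => (hff.2.1 F hF).1
  symm
  refine Finset.card_bij (fun d' _ => insert d' f) ?_ ?_ ?_
  · -- maps into
    intro d' hd'
    rw [mem_cellsWith] at hd' ⊢
    obtain ⟨hd'cell, hed'⟩ := hd'
    have hd'card : d'.card = S.card := (cell_struct N S d' hd'cell).1
    have hd'nf : d' ∉ f := by
      intro hmem
      have := Finset.card_le_card (hfsub d' hmem)
      omega
    refine ⟨⟨d', hd'cell, ?_, ?_, ?_⟩, Finset.subset_insert _ _⟩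
    · rw [Finset.card_insert_of_notMem hd'nf, hff.1]; omega
    · intro F hF
      rcases Finset.mem_insert.1 hF with rfl | hF
      · exact ⟨le_rfl, Finset.card_pos.1 (by omega)⟩
      · exact ⟨(hfsub F hF).trans hed', (hff.2.1 F hF).2⟩
    · intro F hF G hG
      have hsubd : ∀ H, H ∈ insert d' f → H ⊆ d' := by
        intro H hH
        rcases Finset.mem_insert.1 hH with rfl | hH
        · exact Finset.Subset.refl _
        · exact (hfsub H hH).trans hed'
      rcases Finset.mem_insert.1 hF with hF' | hF'
      · right; rw [hF']; exact hsubd G hG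
      · rcases Finset.mem_insert.1 hG with hG' | hG'
        · left; rw [hG']; exact hsubd F hF
        · exact hff.2.2 F hF' G hG'
  · -- injective
    intro d1 h1 d2 h2 heq
    rw [mem_cellsWith] at h1 h2
    have hc1 : d1.card = S.card := (cell_struct N S d1 h1.1).1
    have hnf : d1 ∉ f := fun hmem => by
      have := Finset.card_le_card (hfsub d1 hmem); omega
    have : d1 ∈ insert d2 f := heq ▸ Finset.mem_insert_self d1 f
    rcases Finset.mem_insert.1 this with h | h
    · exact h
    · exact absurd h hnf
  · -- surjective
    intro c'' hc''
    rw [mem_cellsWith] at hc''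
    obtain ⟨⟨d'', hd'', hf''⟩, hsub''⟩ := hc''
    have hd''card : d''.card = S.card := (cell_struct N S d'' hd'').1
    have hd''c : d'' ∈ c'' := hf''.top_mem (Finset.card_pos.1 (by omega))
    have hed'' : e ⊆ d'' := (hf''.2.1 e (hsub'' hef)).1
    refine ⟨d'', mem_cellsWith.2 ⟨hd'', hed''⟩, ?_⟩
    have hd''nf : d'' ∉ f := by
      intro hmem
      have := Finset.card_le_card (hfsub d'' hmem)
      omega
    apply Finset.eq_of_subset_of_card_le (Finset.insert_subset hd''c hsub'')
    rw [hf''.1, hd''card, Finset.card_insert_of_notMem hd''nf, hff.1]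
    omega

theorem bdry_deg : ∀ (N : ℕ) (T S : Finset (Fin k)) (f : Finset (Vt k N)),
    IsCell k N T f → T ⊆ S → T.card + 1 = S.card → (cellsWith k N S f).card = 1
  | 0, T, S, f, hf, hTS, hcard => by
    rw [isCell_zero] at hf
    subst hf
    have : cellsWith k 0 S f = {(S : Finset (Vt k 0))} := by
      ext c
      simp only [mem_cellsWith (N := 0), isCell_zero, Finset.mem_singleton]
      constructor
      · rintro ⟨rfl, _⟩; rfl
      · rintro rfl; exact ⟨rfl, hTS⟩
    rw [this, Finset.card_singleton]
  | (N+1), T, S, f, hf, hTS, hcard => by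
    obtain ⟨e, he, hfe⟩ := isCell_succ.1 hf
    have hecard : e.card = T.card := (cell_struct N T e he).1
    rcases Finset.eq_empty_or_nonempty T with rfl | hTne
    · -- T = ∅, S is a singleton
      rw [Finset.card_empty] at hecard hcard
      have he0 : e = ∅ := Finset.card_eq_zero.1 (by omega)
      subst he0
      have hf0 : f = ∅ := Finset.card_eq_zero.1 (by rw [hfe.1]; simp)
      subst hf0
      obtain ⟨j, hj⟩ := Finset.card_eq_one.1 (show S.card = 1 by omega)
      subst hj
      exact cellsWith_empty_singleton (N+1) j
    · have hS2 : 2 ≤ S.card := by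
        have := Finset.card_pos.2 hTne; omega
      rw [bridge hS2 (by omega) hfe]
      exact bdry_deg N T S e he hTS hcard

def FacetDisj (N : ℕ) (S : Finset (Fin k)) (c : Finset (Vt k N)) (v : Vt k N) : Prop :=
  ((c.erase v).sup (suppV k N) = S ∧ (cellsWith k N S (c.erase v)).card = 2) ∨
  (IsCell k N ((c.erase v).sup (suppV k N)) (c.erase v) ∧ (c.erase v).sup (suppV k N) ⊆ S ∧
    ((c.erase v).sup (suppV k N)).card + 1 = S.card ∧ (cellsWith k N S (c.erase v)).card = 1)

theorem facet_struct_zero (S : Finset (Fin k)) (c : Finset (Vt k 0)) (v : Vt k 0)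
    (hc : IsCell k 0 S c) (hv : v ∈ c) : FacetDisj 0 S c v := by
  rw [isCell_zero] at hc; subst hc
  right
  have h1 : (c.erase v).sup (suppV k 0) = c.erase v := suppV0_sup _
  refine ⟨?_, ?_, ?_, ?_⟩
  · rw [h1]; exact isCell_zero.2 rfl
  · rw [h1]; exact Finset.erase_subset _ _
  · rw [h1]; exact Finset.card_erase_add_one hv
  · have : cellsWith k 0 c (c.erase v) = {c} := by
      ext c'
      rw [mem_cellsWith, Finset.mem_singleton]
      constructor
      · rintro ⟨h', _⟩; exact isCell_zero.1 h'
      · rintro rfl; exact ⟨isCell_zero.2 rfl, Finset.erase_subset _ _⟩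
    rw [this, Finset.card_singleton]

theorem facet_struct_succ {N : ℕ} {S : Finset (Fin k)} (c : Finset (Finset (Vt k N)))
    (v : Finset (Vt k N)) (hc : IsCell k (N+1) S c) (hv : v ∈ c)
    (IH : ∀ (S' : Finset (Fin k)) (c' : Finset (Vt k N)) (v' : Vt k N),
      IsCell k N S' c' → v' ∈ c' → FacetDisj N S' c' v') :
    FacetDisj (N+1) S c v := by
  obtain ⟨d, hd, hf⟩ := isCell_succ.1 hc
  have hdS : d.card = S.card := (cell_struct N S d hd).1
  have hdsup : d.sup (suppV k N) = S := (cell_struct N S d hd).2.1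
  have hvIcc := Finset.mem_Icc.1 (hf.card_mem_Icc hv)
  have hcc : c.card = d.card := hf.1
  have hcerase : (c.erase v).card + 1 = c.card := Finset.card_erase_add_one hv
  by_cases hvd : v.card = d.card
  · -- v is the top vertex of the flag
    have hdne : d.Nonempty := Finset.card_pos.1 (by omega)
    have hdc : d ∈ c := hf.top_mem hdne
    have hvtop : v = d := hf.eq_of_card hv hdc hvd
    subst hvtop
    by_cases hm1 : S.card = 1
    · -- S is a singleton
      have hccard1 : c.card = 1 := by omega
      obtain ⟨a, ha⟩ := Finset.card_eq_one.1 hccard1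
      have had : a = v := by
        have := hdc; rw [ha, Finset.mem_singleton] at this; exact this.symm
      have hcd : c = {v} := by rw [ha, had]
      have hf0 : c.erase v = ∅ := by rw [hcd]; exact Finset.erase_singleton _
      right
      rw [hf0]
      obtain ⟨j, hj⟩ := Finset.card_eq_one.1 hm1
      refine ⟨?_, ?_, ?_, ?_⟩
      · rw [Finset.sup_empty, Finset.bot_eq_empty]; exact isCell_empty (N+1)
      · rw [Finset.sup_empty, Finset.bot_eq_empty]; exact Finset.empty_subset S
      · rw [Finset.sup_empty, Finset.bot_eq_empty, Finset.card_empty]; omega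
      · rw [hj]; exact cellsWith_empty_singleton (N+1) j
    · -- S has at least two elements
      have hm2 : 2 ≤ S.card := by omega
      obtain ⟨e, hec, hecard⟩ := hf.exists_card (j := S.card - 1) (by omega) (by omega)
      have hed : e ≠ v := by intro h; rw [h] at hecard; omega
      have hef : e ∈ c.erase v := Finset.mem_erase.2 ⟨hed, hec⟩
      have hff : IsFlag e (c.erase v) := by
        refine ⟨by omega, ?_, ?_⟩
        · intro F hF
          obtain ⟨hFd, hFc⟩ := Finset.mem_erase.1 hF
          refine ⟨?_, (hf.2.1 F hFc).2⟩
          apply hf.subset_of_card_le hFc hec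
          have hFIcc := Finset.mem_Icc.1 (hf.card_mem_Icc hFc)
          have : F.card ≠ v.card := fun h => hFd (hf.eq_of_card hFc hv h)
          omega
        · intro F hF G hG
          exact hf.2.2 F (Finset.mem_erase.1 hF).2 G (Finset.mem_erase.1 hG).2
      have hesub : e ⊆ v := (hf.2.1 e hec).1
      have hwcard : (v \ e).card = 1 := by rw [Finset.card_sdiff_of_subset hesub]; omega
      obtain ⟨w, hw⟩ := Finset.card_eq_one.1 hwcard
      have hwd : w ∈ v := by
        have h' : w ∈ v \ e := by rw [hw]; exact Finset.mem_singleton_self _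
        exact (Finset.mem_sdiff.1 h').1
      have herase : v.erase w = e := by
        rw [Finset.erase_eq, ← hw, Finset.sdiff_sdiff_self_left,
          (Finset.inter_eq_right).2 hesub]
      have hsupf : (c.erase v).sup (suppV k (N+1)) = e.sup (suppV k N) := by
        apply le_antisymm
        · refine Finset.sup_le fun F hF => ?_
          rw [suppV_succ]
          exact Finset.sup_mono (hff.2.1 F hF).1
        · exact le_trans (le_of_eq (suppV_succ e).symm) (Finset.le_sup hef)
      have hdeg : (cellsWith k (N+1) S (c.erase v)).card = (cellsWith k N S e).card :=
        bridge hm2 (by omega) hff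
      rcases IH S v w hd hwd with ⟨h1, h2⟩ | ⟨h1, h2, h3, h4⟩
      · left
        rw [herase] at h1 h2
        exact ⟨by rw [hsupf, h1], by rw [hdeg, h2]⟩
      · right
        rw [herase] at h1 h2 h3 h4
        refine ⟨?_, by rw [hsupf]; exact h2, by rw [hsupf]; exact h3, by rw [hdeg]; exact h4⟩
        rw [hsupf]
        exact isCell_succ.2 ⟨e, h1, hff⟩
  · -- v is not the top vertex : interior facet
    have hvlt : v.card < d.card := lt_of_le_of_ne hvIcc.2 hvd
    have hv1 : 1 ≤ v.card := hvIcc.1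
    have hdne : d.Nonempty := Finset.card_pos.1 (by omega)
    have hdc : d ∈ c := hf.top_mem hdne
    have hdvne : d ≠ v := fun h => hvd (by rw [h])
    have hdf : d ∈ c.erase v := Finset.mem_erase.2 ⟨hdvne, hdc⟩
    obtain ⟨G, hGc, hGcard⟩ := hf.exists_card (j := v.card + 1) (by omega) (by omega)
    have hGv : G ≠ v := fun h => by rw [h] at hGcard; omega
    have hGf : G ∈ c.erase v := Finset.mem_erase.2 ⟨hGv, hGc⟩
    have hGd : G ⊆ d := (hf.2.1 G hGc).1
    obtain ⟨E, hEcard, hEor⟩ :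
        ∃ E : Finset (Vt k N), E.card = v.card - 1 ∧ (E = ∅ ∨ E ∈ c.erase v) := by
      by_cases h2i : 2 ≤ v.card
      · obtain ⟨E, hEc, hEcard⟩ := hf.exists_card (j := v.card - 1) (by omega) (by omega)
        have : E ≠ v := fun h => by rw [h] at hEcard; omega
        exact ⟨E, hEcard, Or.inr (Finset.mem_erase.2 ⟨this, hEc⟩)⟩
      · exact ⟨∅, by rw [Finset.card_empty]; omega, Or.inl rfl⟩
    have hEc' : E = ∅ ∨ E ∈ c := by
      rcases hEor with h | h
      · exact Or.inl h
      · exact Or.inr (Finset.mem_erase.1 h).2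
    have hEG : E ⊆ G := by
      rcases hEc' with rfl | hE
      · exact Finset.empty_subset _
      · exact hf.subset_of_card_le hE hGc (by omega)
    have hRcard : ∀ x ∉ E, (insert x E).card = v.card := by
      intro x hx; rw [Finset.card_insert_of_notMem hx]; omega
    have hRnf : ∀ x ∉ E, insert x E ∉ c.erase v := by
      intro x hx hmem
      have : insert x E = v := hf.eq_of_card (Finset.mem_erase.1 hmem).2 hv (hRcard x hx)
      exact (Finset.mem_erase.1 hmem).1 this
    have hchar : cellsWith k (N+1) S (c.erase v)
        = (G \ E).image (fun x => insert (insert x E) (c.erase v)) := by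
      ext c''
      rw [mem_cellsWith, Finset.mem_image]
      constructor
      · rintro ⟨hcell'', hsub''⟩
        obtain ⟨d'', hd'', hf''⟩ := isCell_succ.1 hcell''
        have hd''card : d''.card = S.card := (cell_struct N S d'' hd'').1
        have hdc'' : d ∈ c'' := hsub'' hdf
        have hd''d : d'' = d := by
          have hsubdd : d ⊆ d'' := (hf''.2.1 d hdc'').1
          exact (Finset.eq_of_subset_of_card_le hsubdd (by omega)).symm
        obtain ⟨R, hRc'', hRcard''⟩ := hf''.exists_card (j := v.card) (by omega)
          (by rw [hd''d]; omega)
        have hRnf' : R ∉ c.erase v := by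
          intro hmem
          have hRv : R = v := hf.eq_of_card (Finset.mem_erase.1 hmem).2 hv hRcard''
          exact (Finset.mem_erase.1 hmem).1 hRv
        have hc''card : c''.card = S.card := by rw [hf''.1, hd''card]
        have hceq : c'' = insert R (c.erase v) := by
          apply (Finset.eq_of_subset_of_card_le (Finset.insert_subset hRc'' hsub'') ?_).symm
          rw [Finset.card_insert_of_notMem hRnf']; omega
        have hER : E ⊆ R := by
          rcases hEc' with rfl | hE
          · exact Finset.empty_subset _
          · have hEf : E ∈ c.erase v :=
              Finset.mem_erase.2 ⟨fun h => by rw [h] at hEcard; omega, hE⟩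
            exact hf''.subset_of_card_le (hsub'' hEf) hRc'' (by omega)
        have hRG : R ⊆ G := hf''.subset_of_card_le hRc'' (hsub'' hGf) (by omega)
        have hx1 : (R \ E).card = 1 := by rw [Finset.card_sdiff_of_subset hER]; omega
        obtain ⟨x, hx⟩ := Finset.card_eq_one.1 hx1
        have hxR : x ∈ R ∧ x ∉ E := by
          have h' : x ∈ R \ E := by rw [hx]; exact Finset.mem_singleton_self _
          exact ⟨(Finset.mem_sdiff.1 h').1, (Finset.mem_sdiff.1 h').2⟩
        refine ⟨x, Finset.mem_sdiff.2 ⟨hRG hxR.1, hxR.2⟩, ?_⟩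
        have hRE : insert x E = R := by
          apply Finset.eq_of_subset_of_card_le (Finset.insert_subset hxR.1 hER)
          rw [Finset.card_insert_of_notMem hxR.2]; omega
        rw [hRE, ← hceq]
      · rintro ⟨x, hxGE, rfl⟩
        have hxG : x ∈ G := (Finset.mem_sdiff.1 hxGE).1
        have hxE : x ∉ E := (Finset.mem_sdiff.1 hxGE).2
        have hRG : insert x E ⊆ G := Finset.insert_subset hxG hEG
        have hcomp : ∀ F ∈ c.erase v, F ⊆ insert x E ∨ insert x E ⊆ F := by
          intro F hF
          obtain ⟨hFv, hFc⟩ := Finset.mem_erase.1 hF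
          have hFIcc := Finset.mem_Icc.1 (hf.card_mem_Icc hFc)
          have hFne : F.card ≠ v.card := fun h => hFv (hf.eq_of_card hFc hv h)
          rcases lt_or_gt_of_ne hFne with hlt | hgt
          · left
            rcases hEor with heq | hE
            · exfalso
              rw [heq, Finset.card_empty] at hEcard
              omega
            · exact (hf.subset_of_card_le hFc (Finset.mem_erase.1 hE).2
                (by omega)).trans (Finset.subset_insert x E)
          · right
            exact hRG.trans (hf.subset_of_card_le hGc hFc (by omega))
        constructor
        · refine isCell_succ.2 ⟨d, hd, ?_, ?_, ?_⟩
          · rw [Finset.card_insert_of_notMem (hRnf x hxE)]; omega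
          · intro F hF
            rcases Finset.mem_insert.1 hF with h | h
            · rw [h]
              exact ⟨hRG.trans hGd, ⟨x, Finset.mem_insert_self x E⟩⟩
            · exact ⟨(hf.2.1 F (Finset.mem_erase.1 h).2).1,
                (hf.2.1 F (Finset.mem_erase.1 h).2).2⟩
          · intro F hF G' hG'
            rcases Finset.mem_insert.1 hF with h | h
            · rcases Finset.mem_insert.1 hG' with h' | h'
              · left; rw [h, h']
              · rw [h]; exact (hcomp G' h').symm
            · rcases Finset.mem_insert.1 hG' with h' | h'
              · rw [h']; exact hcomp F h
              · exact hf.2.2 F (Finset.mem_erase.1 h).2 G' (Finset.mem_erase.1 h').2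
        · exact Finset.subset_insert _ _
    left
    constructor
    · apply le_antisymm
      · refine Finset.sup_le fun F hF => ?_
        rw [suppV_succ]
        calc F.sup (suppV k N) ≤ d.sup (suppV k N) :=
              Finset.sup_mono (hf.2.1 F (Finset.mem_erase.1 hF).2).1
        _ = S := hdsup
      · calc S = d.sup (suppV k N) := hdsup.symm
          _ = suppV k (N+1) d := (suppV_succ d).symm
          _ ≤ _ := Finset.le_sup hdf
    · have hinj : Set.InjOn (fun x => insert (insert x E) (c.erase v)) ↑(G \ E) := by
        intro x1 hx1 x2 hx2 h
        simp only at h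
        have hx1E : x1 ∉ E := (Finset.mem_sdiff.1 hx1).2
        have hx2E : x2 ∉ E := (Finset.mem_sdiff.1 hx2).2
        have h1 : insert x1 E ∈ insert (insert x2 E) (c.erase v) := by
          rw [← h]; exact Finset.mem_insert_self _ _
        rcases Finset.mem_insert.1 h1 with h' | h'
        · have : x1 ∈ insert x2 E := by rw [← h']; exact Finset.mem_insert_self _ _
          rcases Finset.mem_insert.1 this with h'' | h''
          · exact h''
          · exact absurd h'' hx1E
        · exact absurd h' (hRnf x1 hx1E)
      rw [hchar, Finset.card_image_of_injOn hinj, Finset.card_sdiff_of_subset hEG]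
      omega

theorem facet_struct : ∀ (N : ℕ) (S : Finset (Fin k)) (c : Finset (Vt k N)) (v : Vt k N),
    IsCell k N S c → v ∈ c → FacetDisj N S c v
  | 0, S, c, v, hc, hv => facet_struct_zero S c v hc hv
  | (N+1), S, c, v, hc, hv => facet_struct_succ c v hc hv (facet_struct N)

/-! ### Sperner's lemma for the iterated barycentric subdivision -/

noncomputable def allCells (k N : ℕ) (S : Finset (Fin k)) : Finset (Finset (Vt k N)) :=
  @Finset.filter _ (fun c => IsCell k N S c) (Classical.decPred _) Finset.univ

theorem mem_allCells {N : ℕ} {S : Finset (Fin k)} {c : Finset (Vt k N)} :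
    c ∈ allCells k N S ↔ IsCell k N S c := by simp [allCells]

noncomputable def rainbowCells (k N : ℕ) (S : Finset (Fin k)) (lam : Vt k N → Fin k) :
    Finset (Finset (Vt k N)) :=
  @Finset.filter _ (fun c => c.image lam = S) (Classical.decPred _) (allCells k N S)

theorem mem_rainbowCells {N : ℕ} {S : Finset (Fin k)} {lam : Vt k N → Fin k}
    {c : Finset (Vt k N)} :
    c ∈ rainbowCells k N S lam ↔ IsCell k N S c ∧ c.image lam = S := by
  simp [rainbowCells, mem_allCells, Finset.mem_filter]

theorem odd_iff_zmod {n : ℕ} : Odd n ↔ (n : ZMod 2) = 1 := by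
  rw [Nat.odd_iff, ← ZMod.natCast_mod n 2]
  constructor
  · intro h; rw [h]; rfl
  · intro h
    by_contra h'
    have h2 : n % 2 = 0 := by omega
    rw [h2] at h
    exact one_ne_zero h.symm

theorem image_subset_of_cell {N : ℕ} {S : Finset (Fin k)} {lam : Vt k N → Fin k}
    (hlam : ∀ v, (suppV k N v).Nonempty → lam v ∈ suppV k N v)
    {c : Finset (Vt k N)} (hc : IsCell k N S c) : c.image lam ⊆ S := by
  intro y hy
  obtain ⟨v, hv, rfl⟩ := Finset.mem_image.1 hy
  have h1 := (cell_struct N S c hc).2.2 v hv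
  have h2 : suppV k N v ≤ S := by
    have h3 := Finset.le_sup (f := suppV k N) hv
    rwa [(cell_struct N S c hc).2.1] at h3
  exact h2 (hlam v h1.1)

theorem sperner (N : ℕ) (lam : Vt k N → Fin k)
    (hlam : ∀ v, (suppV k N v).Nonempty → lam v ∈ suppV k N v) :
    ∀ (m : ℕ) (S : Finset (Fin k)), S.card = m → S.Nonempty →
      Odd (rainbowCells k N S lam).card := by
  intro m
  induction m using Nat.strong_induction_on with
  | _ m IH =>
  intro S hm hSne
  rcases eq_or_lt_of_le (Nat.succ_le_of_lt (Finset.card_pos.2 hSne)) with h1 | h2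
  · -- base case : S is a singleton
    obtain ⟨j, hj⟩ := Finset.card_eq_one.1 h1.symm
    subst hj
    have : rainbowCells k N {j} lam = {iterCell k N j} := by
      ext c
      rw [mem_rainbowCells, Finset.mem_singleton]
      constructor
      · rintro ⟨h, _⟩; exact (isCell_singleton N j c).1 h
      · rintro rfl
        have hcell : IsCell k N {j} (iterCell k N j) := (isCell_singleton N j _).2 rfl
        refine ⟨hcell, ?_⟩
        apply Finset.Subset.antisymm (image_subset_of_cell hlam hcell)
        intro y hy
        rw [Finset.mem_singleton] at hy; rw [hy]
        have hcard : (iterCell k N j).card = 1 := by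
          simpa using (cell_struct N {j} _ hcell).1
        obtain ⟨v, hv⟩ := Finset.card_eq_one.1 hcard
        have hvm : v ∈ iterCell k N j := by rw [hv]; exact Finset.mem_singleton_self _
        have hsv := (cell_struct N {j} _ hcell).2.2 v hvm
        have hsub : suppV k N v ≤ {j} := by
          have h3 := Finset.le_sup (f := suppV k N) hvm
          rwa [(cell_struct N {j} _ hcell).2.1] at h3
        have : lam v = j := Finset.mem_singleton.1 (hsub (hlam v hsv.1))
        exact Finset.mem_image.2 ⟨v, hvm, this⟩
    rw [this, Finset.card_singleton]
    exact odd_one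
  · -- inductive step : |S| = m ≥ 2
    have hm2 : 2 ≤ m := by omega
    set js := S.max' hSne with hjs
    have hjsS : js ∈ S := S.max'_mem hSne
    set S' := S.erase js with hS'
    have hS'card : S'.card + 1 = S.card := Finset.card_erase_add_one hjsS
    have hS'ne : S'.Nonempty := Finset.card_pos.1 (by omega)
    have hbetween : ∀ X : Finset (Fin k), S' ⊆ X → X ⊆ S → X = S' ∨ X = S := by
      intro X h1x h2x
      by_cases hjx : js ∈ X
      · right
        refine Finset.Subset.antisymm h2x fun s hs => ?_
        by_cases hsj : s = js
        · rwa [hsj]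
        · exact h1x (Finset.mem_erase.2 ⟨hsj, hs⟩)
      · left
        refine Finset.Subset.antisymm (fun x hx => ?_) h1x
        exact Finset.mem_erase.2 ⟨fun h => hjx (h ▸ hx), h2x hx⟩
    classical
    -- Claim 1 : the per-cell door count
    have claim1 : ∀ c ∈ allCells k N S,
        (((c.filter (fun v => (c.erase v).image lam = S')).card : ZMod 2))
          = if c.image lam = S then 1 else 0 := by
      intro c hc
      rw [mem_allCells] at hc
      have hccard : c.card = S.card := (cell_struct N S c hc).1
      have himg : c.image lam ⊆ S := image_subset_of_cell hlam hc
      by_cases hA : c.image lam = S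
      · rw [if_pos hA]
        have hinj : Set.InjOn lam ↑c := by
          apply Finset.injOn_of_card_image_eq
          rw [hA, hccard]
        obtain ⟨v0, hv0, hlv0⟩ :=
          Finset.mem_image.1 (show js ∈ c.image lam by rw [hA]; exact hjsS)
        have hPiff : ∀ v ∈ c, ((c.erase v).image lam = S' ↔ v = v0) := by
          intro v hv
          constructor
          · intro hPv
            by_contra hne
            have hv0e : v0 ∈ c.erase v := Finset.mem_erase.2 ⟨fun h => hne h.symm, hv0⟩
            have hjs' : js ∈ S' := by
              rw [← hPv]
              exact Finset.mem_image.2 ⟨v0, hv0e, hlv0⟩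
            exact Finset.notMem_erase js S hjs'
          · intro hveq
            rw [hveq]
            apply Finset.Subset.antisymm
            · intro y hy
              obtain ⟨u, hu, rfl⟩ := Finset.mem_image.1 hy
              have huc : u ∈ c := (Finset.mem_erase.1 hu).2
              refine Finset.mem_erase.2 ⟨?_, himg (Finset.mem_image_of_mem lam huc)⟩
              intro h
              have : u = v0 := hinj huc hv0 (by rw [h, hlv0])
              exact (Finset.mem_erase.1 hu).1 this
            · intro y hy
              obtain ⟨hyjs, hyS⟩ := Finset.mem_erase.1 hy
              obtain ⟨u, hu, rfl⟩ := Finset.mem_image.1 (show y ∈ c.image lam by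
                rw [hA]; exact hyS)
              refine Finset.mem_image.2 ⟨u, Finset.mem_erase.2 ⟨?_, hu⟩, rfl⟩
              intro hueq
              apply hyjs
              rw [← hlv0, hueq]
        have hfe : c.filter (fun v => (c.erase v).image lam = S') = {v0} := by
          ext v
          rw [Finset.mem_filter, Finset.mem_singleton]
          constructor
          · rintro ⟨hvc, hPv⟩; exact (hPiff v hvc).1 hPv
          · intro h; rw [h]; exact ⟨hv0, (hPiff v0 hv0).2 rfl⟩
        rw [hfe, Finset.card_singleton, Nat.cast_one]
      · rw [if_neg hA]
        by_cases hB : c.image lam = S'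
        · have hlt : (c.image lam).card < c.card := by rw [hB, hccard]; omega
          obtain ⟨a, ha, b, hb, hab, hlab⟩ :=
            Finset.exists_ne_map_eq_of_card_lt_of_maps_to hlt
              (fun x hx => Finset.mem_image_of_mem lam hx)
          have herase_im : ∀ x ∈ c, (∃ u ∈ c, u ≠ x ∧ lam u = lam x) →
              (c.erase x).image lam = S' := by
            rintro x hx ⟨u, hu, hux, hlux⟩
            apply Finset.Subset.antisymm
            · intro y hy
              obtain ⟨w, hw, rfl⟩ := Finset.mem_image.1 hy
              rw [← hB]
              exact Finset.mem_image_of_mem lam (Finset.mem_erase.1 hw).2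
            · intro y hy
              rw [← hB] at hy
              obtain ⟨w, hw, rfl⟩ := Finset.mem_image.1 hy
              by_cases hwx : w = x
              · exact Finset.mem_image.2 ⟨u, Finset.mem_erase.2 ⟨hux, hu⟩, by rw [hlux, hwx]⟩
              · exact Finset.mem_image.2 ⟨w, Finset.mem_erase.2 ⟨hwx, hw⟩, rfl⟩
          have hina : (c.erase a).image lam = S' :=
            herase_im a ha ⟨b, hb, fun h => hab h.symm, hlab.symm⟩
          have hinj : Set.InjOn lam ↑(c.erase a) := by
            apply Finset.injOn_of_card_image_eq
            rw [hina, Finset.card_erase_of_mem ha, hccard]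
            omega
          have hfe : c.filter (fun v => (c.erase v).image lam = S') = {a, b} := by
            ext v
            rw [Finset.mem_filter, Finset.mem_insert, Finset.mem_singleton]
            constructor
            · rintro ⟨hvc, hPv⟩
              by_contra hor
              push_neg at hor
              have hlv : lam v ∈ (c.erase v).image lam := by
                rw [hPv, ← hB]; exact Finset.mem_image_of_mem _ hvc
              obtain ⟨u, hu, hluv⟩ := Finset.mem_image.1 hlv
              obtain ⟨huv, huc⟩ := Finset.mem_erase.1 hu
              by_cases hua : u = a
              · have hlvb : lam v = lam b := by rw [← hluv, hua, hlab]
                have hvb : v = b := hinj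
                  (Finset.mem_coe.2 (Finset.mem_erase.2 ⟨hor.1, hvc⟩))
                  (Finset.mem_coe.2 (Finset.mem_erase.2 ⟨fun h => hab h.symm, hb⟩))
                  hlvb
                exact hor.2 hvb
              · have huv' : u = v := hinj
                  (Finset.mem_coe.2 (Finset.mem_erase.2 ⟨hua, huc⟩))
                  (Finset.mem_coe.2 (Finset.mem_erase.2 ⟨hor.1, hvc⟩)) hluv
                exact huv huv'
            · intro hv
              rcases hv with h | h
              · rw [h]; exact ⟨ha, hina⟩
              · rw [h]; exact ⟨hb, herase_im b hb ⟨a, ha, hab, hlab⟩⟩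
          rw [hfe, Finset.card_insert_of_notMem (by rw [Finset.mem_singleton]; exact hab),
            Finset.card_singleton]
          decide
        · have hfe : c.filter (fun v => (c.erase v).image lam = S') = ∅ := by
            rw [Finset.filter_eq_empty_iff]
            intro v hvc hPv
            have h1 : S' ⊆ c.image lam := by
              rw [← hPv]
              exact Finset.image_subset_image (Finset.erase_subset _ _)
            rcases hbetween (c.image lam) h1 himg with h | h
            · exact hB h
            · exact hA h
          rw [hfe, Finset.card_empty, Nat.cast_zero]
    -- the pairs (cell, door-vertex)
    set Pairs : Finset (Finset (Vt k N) × Vt k N) :=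
      (allCells k N S).biUnion
        (fun c => (c.filter (fun v => (c.erase v).image lam = S')).image (fun v => (c, v)))
      with hPairsDef
    have hPairs_mem : ∀ p : Finset (Vt k N) × Vt k N, p ∈ Pairs ↔
        IsCell k N S p.1 ∧ p.2 ∈ p.1 ∧ (p.1.erase p.2).image lam = S' := by
      rintro ⟨c, v⟩
      rw [hPairsDef, Finset.mem_biUnion]
      constructor
      · rintro ⟨c', hc', h2⟩
        obtain ⟨v', hv', heq⟩ := Finset.mem_image.1 h2
        obtain ⟨hv'c, hPv⟩ := Finset.mem_filter.1 hv'
        obtain ⟨rfl, rfl⟩ := Prod.mk.inj heq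
        exact ⟨mem_allCells.1 hc', hv'c, hPv⟩
      · rintro ⟨h1, h2, h3⟩
        exact ⟨c, mem_allCells.2 h1,
          Finset.mem_image.2 ⟨v, Finset.mem_filter.2 ⟨h2, h3⟩, rfl⟩⟩
    have hX1 : Pairs.card = ∑ c ∈ allCells k N S,
        (c.filter (fun v => (c.erase v).image lam = S')).card := by
      rw [hPairsDef, Finset.card_biUnion]
      · exact Finset.sum_congr rfl fun c _ =>
          Finset.card_image_of_injective _ (fun a b h => congrArg Prod.snd h)
      · intro c1 h1 c2 h2 hne
        rw [Function.onFun, Finset.disjoint_left]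
        intro p hp1 hp2
        obtain ⟨v1, _, rfl⟩ := Finset.mem_image.1 hp1
        obtain ⟨v2, _, heq2⟩ := Finset.mem_image.1 hp2
        exact hne ((congrArg Prod.fst heq2).symm)
    set Doors : Finset (Finset (Vt k N)) := Pairs.image (fun p => p.1.erase p.2) with hDoorsDef
    have hX2 : Pairs.card = ∑ f ∈ Doors,
        (Pairs.filter (fun p => p.1.erase p.2 = f)).card :=
      Finset.card_eq_sum_card_fiberwise (fun p hp => Finset.mem_image_of_mem _ hp)
    have hfiber : ∀ f ∈ Doors,
        (Pairs.filter (fun p => p.1.erase p.2 = f)).card = (cellsWith k N S f).card := by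
      intro f hfD
      obtain ⟨p0, hp0, hf0⟩ := Finset.mem_image.1 hfD
      obtain ⟨hp0cell, hp0mem, hp0P⟩ := (hPairs_mem p0).1 hp0
      have hp0card : p0.1.card = S.card := (cell_struct N S p0.1 hp0cell).1
      have hfcard : f.card + 1 = S.card := by
        rw [← hf0, ← hp0card]
        exact Finset.card_erase_add_one hp0mem
      have himgf : f.image lam = S' := by rw [← hf0]; exact hp0P
      refine Finset.card_bij (fun p _ => p.1) ?_ ?_ ?_
      · intro p hp
        obtain ⟨hpP, hpf⟩ := Finset.mem_filter.1 hp
        obtain ⟨h1, h2, _⟩ := (hPairs_mem p).1 hpP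
        refine mem_cellsWith.2 ⟨h1, fun x hx => ?_⟩
        rw [← hpf] at hx
        exact (Finset.mem_erase.1 hx).2
      · intro p hp q hq heq
        obtain ⟨hpP, hpf⟩ := Finset.mem_filter.1 hp
        obtain ⟨hqP, hqf⟩ := Finset.mem_filter.1 hq
        obtain ⟨_, hpmem, _⟩ := (hPairs_mem p).1 hpP
        obtain ⟨_, hqmem, _⟩ := (hPairs_mem q).1 hqP
        have hsd : ∀ r : Finset (Vt k N) × Vt k N, r.2 ∈ r.1 → r.1.erase r.2 = f →
            r.1 \ f = {r.2} := by
          intro r hrm hrf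
          ext x
          rw [Finset.mem_sdiff, ← hrf, Finset.mem_singleton, Finset.mem_erase]
          constructor
          · rintro ⟨hx1, hx2⟩
            by_contra hne
            exact hx2 ⟨hne, hx1⟩
          · rintro rfl
            exact ⟨hrm, fun h => h.1 rfl⟩
        have h1 := hsd p hpmem hpf
        have h2 := hsd q hqmem hqf
        rw [heq] at h1
        rw [h1] at h2
        have : p.2 = q.2 := Finset.singleton_inj.1 h2.symm |>.symm
        exact Prod.ext heq this
      · intro c' hc'
        obtain ⟨hc'cell, hc'sub⟩ := mem_cellsWith.1 hc'
        have hc'card : c'.card = S.card := (cell_struct N S c' hc'cell).1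
        have hsd : (c' \ f).card = 1 := by
          rw [Finset.card_sdiff_of_subset hc'sub]
          omega
        obtain ⟨v', hv'⟩ := Finset.card_eq_one.1 hsd
        have hv'mem : v' ∈ c' ∧ v' ∉ f := by
          have h' : v' ∈ c' \ f := by rw [hv']; exact Finset.mem_singleton_self _
          exact ⟨(Finset.mem_sdiff.1 h').1, (Finset.mem_sdiff.1 h').2⟩
        have herase' : c'.erase v' = f := by
          ext x
          rw [Finset.mem_erase]
          constructor
          · rintro ⟨hxv, hxc⟩
            by_contra hxf
            have h' : x ∈ c' \ f := Finset.mem_sdiff.2 ⟨hxc, hxf⟩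
            rw [hv'] at h'
            exact hxv (Finset.mem_singleton.1 h')
          · intro hxf
            exact ⟨fun h => hv'mem.2 (h ▸ hxf), hc'sub hxf⟩
        refine ⟨(c', v'), Finset.mem_filter.2 ⟨(hPairs_mem (c', v')).2
          ⟨hc'cell, hv'mem.1, by rw [herase', himgf]⟩, herase'⟩, rfl⟩
    have hdoor : ∀ f ∈ Doors,
        (f.sup (suppV k N) = S ∧ (cellsWith k N S f).card = 2) ∨
        (f ∈ rainbowCells k N S' lam ∧ (cellsWith k N S f).card = 1) := by
      intro f hfD
      obtain ⟨p0, hp0, hf0⟩ := Finset.mem_image.1 hfD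
      obtain ⟨hp0cell, hp0mem, hp0P⟩ := (hPairs_mem p0).1 hp0
      have himgf : f.image lam = S' := by rw [← hf0]; exact hp0P
      rcases facet_struct N S p0.1 p0.2 hp0cell hp0mem with ⟨h1, h2⟩ | ⟨h1, h2, h3, h4⟩
      · left
        rw [hf0] at h1 h2
        exact ⟨h1, h2⟩
      · right
        rw [hf0] at h1 h2 h3 h4
        have hS'sup : S' ⊆ f.sup (suppV k N) := by
          intro y hy
          rw [← himgf] at hy
          obtain ⟨w, hw, rfl⟩ := Finset.mem_image.1 hy
          have hcp := (cell_struct _ _ _ h1).2.2 w hw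
          have : suppV k N w ≤ f.sup (suppV k N) := Finset.le_sup hw
          exact this (hlam w hcp.1)
        rcases hbetween (f.sup (suppV k N)) hS'sup h2 with hs | hs
        · rw [hs] at h1
          exact ⟨mem_rainbowCells.2 ⟨h1, himgf⟩, h4⟩
        · exfalso
          rw [hs] at h3
          omega
    -- conclusion
    have hodd' : Odd (rainbowCells k N S' lam).card :=
      IH (m - 1) (by omega) S' (by omega) hS'ne
    rw [odd_iff_zmod] at hodd' ⊢
    have e1 : ((rainbowCells k N S lam).card : ZMod 2) = (Pairs.card : ZMod 2) := by
      have hrb : rainbowCells k N S lam =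
          (allCells k N S).filter (fun c => c.image lam = S) := by
        rw [rainbowCells]
        congr 1
      rw [hrb, ← Finset.sum_boole, Finset.sum_congr rfl (fun c hc => (claim1 c hc).symm), hX1]
      push_cast
      rfl
    have e2 : (Pairs.card : ZMod 2) = ((rainbowCells k N S' lam).card : ZMod 2) := by
      have key : ∀ f ∈ Doors,
          (((Pairs.filter (fun p => p.1.erase p.2 = f)).card : ZMod 2))
            = if f ∈ rainbowCells k N S' lam then 1 else 0 := by
        intro f hfD
        rw [hfiber f hfD]
        rcases hdoor f hfD with ⟨hsup, hcard2⟩ | ⟨hrb, hcard1⟩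
        · rw [hcard2, if_neg]
          · decide
          · intro hmem
            obtain ⟨hcellf, _⟩ := mem_rainbowCells.1 hmem
            have := (cell_struct N S' f hcellf).2.1
            rw [this] at hsup
            rw [hsup] at hS'card
            omega
        · rw [hcard1, if_pos hrb, Nat.cast_one]
      rw [hX2]
      push_cast
      rw [Finset.sum_congr rfl key, Finset.sum_boole]
      have : Doors.filter (fun f => f ∈ rainbowCells k N S' lam)
          = rainbowCells k N S' lam := by
        apply Finset.Subset.antisymm
        · intro f hf
          exact (Finset.mem_filter.1 hf).2
        · intro f hf
          refine Finset.mem_filter.2 ⟨?_, hf⟩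
          obtain ⟨hcellf, himgf⟩ := mem_rainbowCells.1 hf
          have hfcard : f.card = S'.card := (cell_struct N S' f hcellf).1
          have hdeg1 : (cellsWith k N S f).card = 1 :=
            bdry_deg N S' S f hcellf (Finset.erase_subset _ _) (by omega)
          have hne : (cellsWith k N S f).Nonempty := Finset.card_pos.1 (by omega)
          obtain ⟨c', hc'⟩ := hne
          obtain ⟨hc'cell, hc'sub⟩ := mem_cellsWith.1 hc'
          have hc'card : c'.card = S.card := (cell_struct N S c' hc'cell).1
          have hsd : (c' \ f).card = 1 := by
            rw [Finset.card_sdiff_of_subset hc'sub]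
            omega
          obtain ⟨v', hv'⟩ := Finset.card_eq_one.1 hsd
          have hv'mem : v' ∈ c' ∧ v' ∉ f := by
            have h' : v' ∈ c' \ f := by rw [hv']; exact Finset.mem_singleton_self _
            exact ⟨(Finset.mem_sdiff.1 h').1, (Finset.mem_sdiff.1 h').2⟩
          have herase' : c'.erase v' = f := by
            ext x
            rw [Finset.mem_erase]
            constructor
            · rintro ⟨hxv, hxc⟩
              by_contra hxf
              have h' : x ∈ c' \ f := Finset.mem_sdiff.2 ⟨hxc, hxf⟩
              rw [hv'] at h'
              exact hxv (Finset.mem_singleton.1 h')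
            · intro hxf
              exact ⟨fun h => hv'mem.2 (h ▸ hxf), hc'sub hxf⟩
          rw [hDoorsDef]
          exact Finset.mem_image.2 ⟨(c', v'), (hPairs_mem (c', v')).2
            ⟨hc'cell, hv'mem.1, by rw [herase', himgf]⟩, herase'⟩
      rw [this]
    rw [e1, e2]
    exact hodd'

/-! ### Diameter estimates -/

theorem posi_smul_card {N : ℕ} (T : Finset (Vt k N)) (hT : T.Nonempty) :
    (T.card : ℝ) • posi k (N+1) T = ∑ v ∈ T, posi k N v := by
  rw [posi_succ, smul_smul]
  rw [mul_inv_cancel₀ (by exact_mod_cast Finset.card_pos.2 hT |>.ne')]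
  rw [one_smul]

theorem avg_dist {N : ℕ} (d T : Finset (Vt k N)) (D : ℝ) (hT : T.Nonempty) (hTd : T ⊆ d)
    (hD : ∀ x ∈ d, ∀ y ∈ d, ‖posi k N x - posi k N y‖ ≤ D) (x : Vt k N) (hx : x ∈ d) :
    ‖posi k N x - posi k (N+1) T‖ ≤ D := by
  have hn : (0:ℝ) < (T.card : ℝ) := by exact_mod_cast Finset.card_pos.2 hT
  have key : (T.card : ℝ) • (posi k N x - posi k (N+1) T)
      = ∑ v ∈ T, (posi k N x - posi k N v) := by
    rw [smul_sub, posi_smul_card T hT, Finset.sum_sub_distrib, Finset.sum_const]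
    congr 1
    rw [← Nat.cast_smul_eq_nsmul ℝ]
  have h1 : (T.card : ℝ) * ‖posi k N x - posi k (N+1) T‖ ≤ (T.card : ℝ) * D := by
    calc (T.card : ℝ) * ‖posi k N x - posi k (N+1) T‖
        = ‖(T.card : ℝ) • (posi k N x - posi k (N+1) T)‖ := by
          rw [norm_smul, Real.norm_of_nonneg hn.le]
      _ = ‖∑ v ∈ T, (posi k N x - posi k N v)‖ := by rw [key]
      _ ≤ ∑ v ∈ T, ‖posi k N x - posi k N v‖ := norm_sum_le _ _
      _ ≤ ∑ _v ∈ T, D := Finset.sum_le_sum fun v hv => hD x hx v (hTd hv)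
      _ = (T.card : ℝ) * D := by rw [Finset.sum_const, nsmul_eq_mul]
  exact le_of_mul_le_mul_left h1 hn

theorem step_bound (hk : 0 < k) {N : ℕ} (d T T' : Finset (Vt k N)) (D : ℝ) (hDpos : 0 ≤ D)
    (hD : ∀ x ∈ d, ∀ y ∈ d, ‖posi k N x - posi k N y‖ ≤ D)
    (hT : T.Nonempty) (hsub : T ⊆ T') (hT'd : T' ⊆ d) (hcard : T'.card ≤ k) :
    ‖posi k (N+1) T' - posi k (N+1) T‖ ≤ (1 - 1/(k:ℝ)) * D := by
  have hT' : T'.Nonempty := hT.mono hsub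
  have hn' : (0:ℝ) < (T'.card : ℝ) := by exact_mod_cast Finset.card_pos.2 hT'
  have hkR : (0:ℝ) < (k:ℝ) := by exact_mod_cast hk
  have hcn : (T' \ T).card + T.card = T'.card := by
    rw [Finset.card_sdiff_of_subset hsub]
    have := Finset.card_le_card hsub
    omega
  have hcadd : (((T' \ T).card : ℝ)) + (T.card : ℝ) = (T'.card : ℝ) := by exact_mod_cast hcn
  have key : (T'.card : ℝ) • (posi k (N+1) T' - posi k (N+1) T)
      = ∑ v ∈ T' \ T, (posi k N v - posi k (N+1) T) := by
    rw [smul_sub, posi_smul_card T' hT', ← Finset.sum_sdiff hsub,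
      Finset.sum_sub_distrib, Finset.sum_const, ← Nat.cast_smul_eq_nsmul ℝ,
      ← hcadd, add_smul, posi_smul_card T hT]
    abel
  have h1 : (T'.card : ℝ) * ‖posi k (N+1) T' - posi k (N+1) T‖
      ≤ ((T' \ T).card : ℝ) * D := by
    calc (T'.card : ℝ) * ‖posi k (N+1) T' - posi k (N+1) T‖
        = ‖(T'.card : ℝ) • (posi k (N+1) T' - posi k (N+1) T)‖ := by
          rw [norm_smul, Real.norm_of_nonneg hn'.le]
      _ = ‖∑ v ∈ T' \ T, (posi k N v - posi k (N+1) T)‖ := by rw [key]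
      _ ≤ ∑ v ∈ T' \ T, ‖posi k N v - posi k (N+1) T‖ := norm_sum_le _ _
      _ ≤ ∑ _v ∈ T' \ T, D := Finset.sum_le_sum fun v hv =>
          avg_dist d T D hT (hsub.trans hT'd) hD v (hT'd (Finset.mem_sdiff.1 hv).1)
      _ = ((T' \ T).card : ℝ) * D := by rw [Finset.sum_const, nsmul_eq_mul]
  have h2 : ((T' \ T).card : ℝ) ≤ (T'.card : ℝ) * (1 - 1/(k:ℝ)) := by
    have hc1 : (T' \ T).card + T.card = T'.card := by
      rw [Finset.card_sdiff_of_subset hsub]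
      have := Finset.card_le_card hsub
      omega
    have hc2 : 1 ≤ T.card := Finset.card_pos.2 hT
    have hsd : ((T' \ T).card : ℝ) ≤ (T'.card : ℝ) - 1 := by
      have h4 : (T' \ T).card + 1 ≤ T'.card := by omega
      have h5 : (((T' \ T).card : ℝ)) + 1 ≤ (T'.card : ℝ) := by exact_mod_cast h4
      linarith
    have hTk : (T'.card : ℝ) ≤ (k : ℝ) := by exact_mod_cast hcard
    rw [mul_sub, mul_one]
    have : (T'.card : ℝ) * (1/(k:ℝ)) ≤ 1 := by
      rw [mul_one_div, div_le_one hkR]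
      exact hTk
    linarith
  have h3 : ((T' \ T).card : ℝ) * D ≤ (T'.card : ℝ) * ((1 - 1/(k:ℝ)) * D) := by
    rw [← mul_assoc]
    exact mul_le_mul_of_nonneg_right h2 hDpos
  exact le_of_mul_le_mul_left (h1.trans h3) hn'

theorem diam_bound (hk : 0 < k) : ∀ (N : ℕ) (S : Finset (Fin k)) (c : Finset (Vt k N)),
    IsCell k N S c → ∀ v ∈ c, ∀ w ∈ c,
      ‖posi k N v - posi k N w‖ ≤ (1 - 1/(k:ℝ))^N
  | 0, S, c, hc, v, hv, w, hw => by
    rw [pow_zero, posi_zero, posi_zero]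
    rw [pi_norm_le_iff_of_nonneg zero_le_one]
    intro i
    simp only [Pi.sub_apply]
    split_ifs <;> norm_num
  | (N+1), S, c, hc, v, hv, w, hw => by
    obtain ⟨d, hd, hf⟩ := isCell_succ.1 hc
    have hIH := fun x hx y hy => diam_bound hk N S d hd x hx y hy
    have hDpos : (0:ℝ) ≤ (1 - 1/(k:ℝ))^N := by
      apply pow_nonneg
      have : (1:ℝ) ≤ (k:ℝ) := by exact_mod_cast hk
      have h0 : (0:ℝ) < (k:ℝ) := by exact_mod_cast hk
      rw [sub_nonneg, div_le_one h0]
      exact this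
    have hcard : ∀ F ∈ c, F.card ≤ k := by
      intro F hF
      have h1 : F.card ≤ d.card := Finset.mem_Icc.1 (hf.card_mem_Icc hF) |>.2
      have h2 : d.card = S.card := (cell_struct N S d hd).1
      have h3 : S.card ≤ k := by
        have := Finset.card_le_univ S
        simpa using this
      omega
    rw [pow_succ, mul_comm ((1 - 1/(k:ℝ))^N)]
    rcases hf.2.2 v hv w hw with hsub | hsub
    · rw [norm_sub_rev]
      exact step_bound hk d v w _ hDpos hIH (hf.2.1 v hv).2 hsub (hf.2.1 w hw).1
        (hcard w hw)
    · exact step_bound hk d w v _ hDpos hIH (hf.2.1 w hw).2 hsub (hf.2.1 v hv).1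
        (hcard v hv)

end CKKM


open Finset

theorem stmt7 (k : ℕ) (hk : 0 < k) (A : Fin k → Fin k → Set (Fin k → ℝ))
    (hclosed : ∀ i j, IsClosed (A i j))
    (hKKM : ∀ i, IsKKM (A i)) :
    ∃ π : Equiv.Perm (Fin k), (⋂ j, A (π j) j).Nonempty := by
  classical
  open CKKM in
  by_contra hcon
  push_neg at hcon
  set rnk : ℕ → Fin k := fun n => ⟨n % k, Nat.mod_lt _ hk⟩ with hrnk
  -- labelings of the subdivisions
  have hlabel : ∀ M : ℕ, ∃ lam : CKKM.Vt k (M+1) → Fin k,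
      (∀ v, (CKKM.suppV k (M+1) v).Nonempty → lam v ∈ CKKM.suppV k (M+1) v) ∧
      (∀ v : Finset (CKKM.Vt k M), (CKKM.suppV k (M+1) v).Nonempty →
        CKKM.posi k (M+1) v ∈ face (CKKM.suppV k (M+1) v) →
          CKKM.posi k (M+1) v ∈ A (rnk (v.card - 1)) (lam v)) := by
    intro M
    have hv : ∀ v : Finset (CKKM.Vt k M), ∃ j : Fin k,
        ((CKKM.suppV k (M+1) v).Nonempty → j ∈ CKKM.suppV k (M+1) v) ∧
        ((CKKM.suppV k (M+1) v).Nonempty →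
          CKKM.posi k (M+1) v ∈ face (CKKM.suppV k (M+1) v) →
            CKKM.posi k (M+1) v ∈ A (rnk (v.card - 1)) j) := by
      intro v
      by_cases hne : (CKKM.suppV k (M+1) v).Nonempty
      · by_cases hface : CKKM.posi k (M+1) v ∈ face (CKKM.suppV k (M+1) v)
        · have hcov := hKKM (rnk (v.card - 1)) (CKKM.suppV k (M+1) v) hne hface
          rw [Set.mem_iUnion₂] at hcov
          obtain ⟨j, hj, hmem⟩ := hcov
          exact ⟨j, fun _ => hj, fun _ _ => hmem⟩
        · exact ⟨hne.choose, fun _ => hne.choose_spec, fun _ hf => absurd hf hface⟩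
      · exact ⟨⟨0, hk⟩, fun h => absurd h hne, fun h _ => absurd h hne⟩
    choose lam h1 h2 using hv
    exact ⟨lam, fun v h => h1 v h, fun v hne hface => h2 v hne hface⟩
  -- Lebesgue number
  have hcov : ∀ π : Equiv.Perm (Fin k), simplex k ⊆ ⋃ j, (A (π j) j)ᶜ := by
    intro π x hx
    have hempty := hcon π
    by_contra hx2
    rw [Set.mem_iUnion] at hx2
    push_neg at hx2
    have hxin : x ∈ ⋂ j, A (π j) j := Set.mem_iInter.2 fun j => by
      have := hx2 j
      rwa [Set.notMem_compl_iff] at this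
    rw [hempty] at hxin
    exact hxin
  have hleb : ∀ π : Equiv.Perm (Fin k), ∃ δ > 0, ∀ x ∈ simplex k,
      ∃ j, Metric.ball x δ ⊆ (A (π j) j)ᶜ := by
    intro π
    exact lebesgue_number_lemma_of_metric (isCompact_stdSimplex ℝ (Fin k))
      (fun j => (hclosed _ _).isOpen_compl) (hcov π)
  choose δf hδpos hδball using hleb
  have hPne : Nonempty (Equiv.Perm (Fin k)) := ⟨Equiv.refl _⟩
  set δ := Finset.univ.inf' Finset.univ_nonempty δf with hδdef
  have hδ0 : 0 < δ := by
    rw [hδdef, Finset.lt_inf'_iff]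
    exact fun π _ => hδpos π
  have hδle : ∀ π, δ ≤ δf π := fun π => Finset.inf'_le _ (Finset.mem_univ _)
  -- mesh
  have hkR : (0:ℝ) < (k:ℝ) := by exact_mod_cast hk
  have hρ0 : (0:ℝ) ≤ 1 - 1/(k:ℝ) := by
    rw [sub_nonneg, div_le_one hkR]
    exact_mod_cast hk
  have hρ1 : 1 - 1/(k:ℝ) < 1 := by
    have : (0:ℝ) < 1/(k:ℝ) := by positivity
    linarith
  obtain ⟨N, hN⟩ := exists_pow_lt_of_lt_one hδ0 hρ1
  have hmesh : (1 - 1/(k:ℝ))^(N+1) < δ :=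
    lt_of_le_of_lt (pow_le_pow_of_le_one hρ0 hρ1.le (by omega)) hN
  -- Sperner at level N+1
  obtain ⟨lam, hlam1, hlam2⟩ := hlabel N
  have hSne : (Finset.univ : Finset (Fin k)).Nonempty := ⟨⟨0, hk⟩, Finset.mem_univ _⟩
  have hodd := CKKM.sperner (N+1) lam hlam1 (Finset.univ : Finset (Fin k)).card
    Finset.univ rfl hSne
  obtain ⟨c, hcmem⟩ := Finset.card_pos.1 hodd.pos
  obtain ⟨hcell, himg⟩ := CKKM.mem_rainbowCells.1 hcmem
  obtain ⟨d, hd, hf⟩ := CKKM.isCell_succ.1 hcell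
  have hdcard : d.card = k := by
    have := (CKKM.cell_struct (N+1) Finset.univ c hcell).1
    have h2 := hf.1
    rw [Finset.card_univ, Fintype.card_fin] at this
    omega
  have hvtx : ∀ i : Fin k, ∃ v ∈ c, (v : Finset (CKKM.Vt k N)).card = i.val + 1 := by
    intro i
    exact hf.exists_card (by omega) (by rw [hdcard]; omega)
  choose vtx hvtxc hvtxcard using hvtx
  have hvprop := (CKKM.cell_struct (N+1) Finset.univ c hcell).2.2
  have hmem : ∀ i : Fin k, CKKM.posi k (N+1) (vtx i) ∈ A i (lam (vtx i)) := by
    intro i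
    obtain ⟨hsne, hpos, hsum, hvan⟩ := hvprop (vtx i) (hvtxc i)
    have hface : CKKM.posi k (N+1) (vtx i) ∈ face (CKKM.suppV k (N+1) (vtx i)) :=
      ⟨⟨hpos, hsum⟩, hvan⟩
    have hres := hlam2 (vtx i) hsne hface
    have hr : rnk ((vtx i : Finset (CKKM.Vt k N)).card - 1) = i := by
      rw [hrnk]
      apply Fin.ext
      show ((vtx i : Finset (CKKM.Vt k N)).card - 1) % k = i.val
      rw [hvtxcard i]
      simp [Nat.mod_eq_of_lt i.isLt]
    rwa [hr] at hres
  have hinjlam : Function.Injective (fun i => lam (vtx i)) := by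
    intro i1 i2 h
    have hccard : c.card = k := by
      have := (CKKM.cell_struct (N+1) Finset.univ c hcell).1
      rwa [Finset.card_univ, Fintype.card_fin] at this
    have hinj : Set.InjOn lam ↑c := Finset.injOn_of_card_image_eq (by
      rw [himg, Finset.card_univ, Fintype.card_fin, hccard])
    have heqv : vtx i1 = vtx i2 := hinj (Finset.mem_coe.2 (hvtxc i1))
      (Finset.mem_coe.2 (hvtxc i2)) h
    have hc := congrArg Finset.card heqv
    rw [hvtxcard i1, hvtxcard i2] at hc
    exact Fin.ext (by omega)
  set π : Equiv.Perm (Fin k) := Equiv.ofBijective _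
    (Finite.injective_iff_bijective.1 hinjlam) with hπdef
  set σ := π.symm with hσdef
  set x0 := CKKM.posi k (N+1) (vtx ⟨0, hk⟩) with hx0def
  have hx0 : x0 ∈ simplex k := by
    obtain ⟨hsne, hpos, hsum, hvan⟩ := hvprop (vtx ⟨0, hk⟩) (hvtxc ⟨0, hk⟩)
    exact ⟨hpos, hsum⟩
  obtain ⟨j, hball⟩ := hδball σ x0 hx0
  have hπσ : lam (vtx (σ j)) = j := by
    have : π (σ j) = j := π.apply_symm_apply j
    rw [hπdef] at this
    exact this
  have hAij : CKKM.posi k (N+1) (vtx (σ j)) ∈ A (σ j) j := by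
    have := hmem (σ j)
    rwa [hπσ] at this
  have hdist : dist (CKKM.posi k (N+1) (vtx (σ j))) x0 < δf σ := by
    rw [dist_eq_norm]
    calc ‖CKKM.posi k (N+1) (vtx (σ j)) - x0‖ ≤ (1 - 1/(k:ℝ))^(N+1) :=
          CKKM.diam_bound hk (N+1) Finset.univ c hcell (vtx (σ j)) (hvtxc (σ j))
            (vtx ⟨0, hk⟩) (hvtxc ⟨0, hk⟩)
      _ < δ := hmesh
      _ ≤ δf σ := hδle σ
  exact hball (Metric.mem_ball.2 hdist) hAij
end

section
/- If (A_1, …, A_k) is a dual KKM cover of Δ^{k−1}, then the cyclically shifted tuple (A_2, A_3, …, A_k, A_1) is a KKM cover of Δ^{k−1}. -/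
open Finset

lemma facet_subset_aux {k : ℕ} (hk : 2 ≤ k) (A : Fin k → Set (Fin k → ℝ))
    (hdual : IsDualKKM A) (i : Fin k) : facet i ⊆ A i := by
  intro x hx
  set b : Fin k → ℝ := fun j => if j = i then 0 else ((k : ℝ) - 1)⁻¹ with hb
  have hkpos : (0:ℝ) < (k : ℝ) - 1 := by
    have : (2:ℝ) ≤ (k:ℝ) := by exact_mod_cast hk
    linarith
  have hsumb : ∑ j, b j = 1 := by
    rw [hb]
    rw [Finset.sum_ite, Finset.sum_const, Finset.sum_const, smul_zero, zero_add,
      Finset.filter_ne', Finset.card_erase_of_mem (Finset.mem_univ i),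
      Finset.card_univ, Fintype.card_fin, nsmul_eq_mul]
    rw [Nat.cast_sub (by omega : 1 ≤ k), Nat.cast_one]
    field_simp
  -- the approximating family
  set y : ℝ → (Fin k → ℝ) := fun t => (1 - t) • x + t • b with hy
  have hxs : ∀ i', 0 ≤ x i' := (hx.1 : x ∈ stdSimplex ℝ (Fin k)).1
  have hxsum : ∑ j, x j = 1 := (hx.1 : x ∈ stdSimplex ℝ (Fin k)).2
  have hmem : ∀ t : ℝ, 0 < t → t ≤ 1 → y t ∈ A i := by
    intro t ht0 ht1
    have hys : y t ∈ simplex k := by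
      constructor
      · intro j
        have : 0 ≤ b j := by
          rw [hb]; dsimp only; split <;> positivity
        have := hxs j
        simp only [hy, Pi.add_apply, Pi.smul_apply, smul_eq_mul]
        nlinarith
      · simp only [hy, Pi.add_apply, Pi.smul_apply, smul_eq_mul, Finset.sum_add_distrib,
          ← Finset.mul_sum, hxsum, hsumb]
        ring
    have hyi : y t i = 0 := by
      simp [hy, hx.2, hb]
    have hpos : ∀ j, j ≠ i → 0 < y t j := by
      intro j hj
      have hbj : b j = ((k:ℝ) - 1)⁻¹ := by simp [hb, hj]
      have : 0 ≤ (1 - t) * x j := by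
        have := hxs j; nlinarith
      simp only [hy, Pi.add_apply, Pi.smul_apply, smul_eq_mul, hbj]
      have : 0 < t * ((k:ℝ)-1)⁻¹ := by positivity
      nlinarith
    obtain ⟨m, hm⟩ := Set.mem_iUnion.mp (hdual.2.1 hys)
    by_cases hmi : m = i
    · rwa [hmi] at hm
    · exfalso
      have := (hdual.2.2 m i hmi ⟨hm, ⟨hys, hyi⟩⟩).1.2
      exact absurd this (ne_of_gt (hpos m hmi))
  -- limit
  have hcont : Continuous y := by
    apply Continuous.add
    · exact (continuous_const.sub continuous_id).smul continuous_const
    · exact continuous_id.smul continuous_const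
  have hy0 : y 0 = x := by simp [hy]
  have htend : Filter.Tendsto (fun n : ℕ => y (1 / (n + 1))) Filter.atTop (nhds x) := by
    rw [← hy0]
    exact (hcont.tendsto 0).comp tendsto_one_div_add_atTop_nhds_zero_nat
  exact (hdual.1 i).1.mem_of_tendsto htend (Filter.Eventually.of_forall fun n => by
    apply hmem
    · positivity
    · rw [div_le_one (by positivity)]
      have : (0:ℝ) ≤ n := Nat.cast_nonneg n
      linarith)

open Fin.NatCast

theorem stmt9 (k : ℕ) [NeZero k] (A : Fin k → Set (Fin k → ℝ))
    (hdual : IsDualKKM A) :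
    IsKKM (fun j => A (j + 1)) := by
  intro S hS x hx
  by_cases hall : ∀ j ∈ S, j + 1 ∈ S
  · -- S is closed under +1, hence S = univ
    have key : ∀ n : ℕ, ∀ s ∈ S, s + (n : Fin k) ∈ S := by
      intro n
      induction n with
      | zero => intro s hs; simpa using hs
      | succ n ih =>
        intro s hs
        have : ((n + 1 : ℕ) : Fin k) = (n : Fin k) + 1 := by push_cast; ring
        rw [this, ← add_assoc]
        exact hall _ (ih s hs)
    obtain ⟨s, hs⟩ := hS
    have huniv : ∀ t : Fin k, t ∈ S := by
      intro t
      have h1 : s + (((t - s : Fin k).val : ℕ) : Fin k) ∈ S := key _ s hs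
      rwa [Fin.cast_val_eq_self, add_sub_cancel] at h1
    obtain ⟨i, hi⟩ := Set.mem_iUnion.mp (hdual.2.1 hx.1)
    refine Set.mem_biUnion (huniv (i - 1)) ?_
    simpa [sub_add_cancel] using hi
  · push_neg at hall
    obtain ⟨j, hjS, hj1⟩ := hall
    have hk : 2 ≤ k := by
      by_contra h
      have hk1 : k = 1 := by have := NeZero.ne k; omega
      subst hk1
      exact hj1 (by simpa [Subsingleton.elim (j + 1) j] using hjS)
    have hfacet := facet_subset_aux hk A hdual (j + 1)
    exact Set.mem_biUnion hjS (hfacet ⟨hx.1, hx.2 (j + 1) hj1⟩)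
end

section
/- Sparse KKM for k = 2 (moving knife): let n ≥ 2, and for each i ∈ [n] let A^i_1, A^i_2 be closed subsets of [0,1] such that for every set C ⊆ [n] of size n−1 we have 0 ∈ ⋃_{i∈C} A^i_2, 1 ∈ ⋃_{i∈C} A^i_1, and [0,1] = ⋃_{i∈C}(A^i_1 ∪ A^i_2). Then there exist distinct i₁, i₂ ∈ [n] and a point x ∈ [0,1] with x ∈ A^{i₁}_1 ∩ A^{i₂}_2. -/
open Finset

theorem stmt15 (n : ℕ) (hn : 2 ≤ n)
    (A1 A2 : Fin n → Set ℝ)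
    (hclosed : ∀ i, IsClosed (A1 i) ∧ IsClosed (A2 i) ∧
      A1 i ⊆ Set.Icc 0 1 ∧ A2 i ⊆ Set.Icc 0 1)
    (hweak : ∀ C : Finset (Fin n), C.card = n - 1 →
      (0 : ℝ) ∈ ⋃ i ∈ C, A2 i ∧ (1 : ℝ) ∈ ⋃ i ∈ C, A1 i ∧
      Set.Icc (0 : ℝ) 1 ⊆ ⋃ i ∈ C, (A1 i ∪ A2 i)) :
    ∃ i₁ i₂ : Fin n, i₁ ≠ i₂ ∧ ∃ x ∈ Set.Icc (0 : ℝ) 1, x ∈ A1 i₁ ∩ A2 i₂ := by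
  have hcard : ∀ j : Fin n, ((Finset.univ.erase j)).card = n - 1 := by
    intro j
    rw [Finset.card_erase_of_mem (Finset.mem_univ j), Finset.card_univ, Fintype.card_fin]
  set S : Set ℝ := ⋃ i, A2 i with hS
  have hScomp : IsCompact S := isCompact_iUnion fun i =>
    isCompact_Icc.of_isClosed_subset (hclosed i).2.1 (hclosed i).2.2.2
  have i0 : Fin n := ⟨0, by omega⟩
  have h0 : (0 : ℝ) ∈ S := by
    have := (hweak (Finset.univ.erase i0) (hcard i0)).1
    simp only [Set.mem_iUnion] at this
    obtain ⟨i, _, hi⟩ := this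
    exact Set.mem_iUnion.mpr ⟨i, hi⟩
  set t : ℝ := sSup S with ht
  have htS : t ∈ S := hScomp.sSup_mem ⟨0, h0⟩
  obtain ⟨i₂, hti₂⟩ := Set.mem_iUnion.mp htS
  have ht01 : t ∈ Set.Icc (0 : ℝ) 1 := (hclosed i₂).2.2.2 hti₂
  have hub : ∀ x ∈ S, x ≤ t := fun x hx => le_csSup hScomp.bddAbove hx
  set C : Finset (Fin n) := Finset.univ.erase i₂ with hC
  have hF : t ∈ ⋃ i ∈ C, A1 i := by
    rcases eq_or_lt_of_le ht01.2 with h1 | h1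
    · rw [h1]; exact (hweak C (hcard i₂)).2.1
    · have hsub : Set.Ioc t 1 ⊆ ⋃ i ∈ C, A1 i := by
        intro x hx
        have hx01 : x ∈ Set.Icc (0 : ℝ) 1 := ⟨le_trans ht01.1 hx.1.le, hx.2⟩
        have hx' := (hweak C (hcard i₂)).2.2 hx01
        simp only [Set.mem_iUnion, Set.mem_union] at hx' ⊢
        obtain ⟨i, hiC, hcase⟩ := hx'
        cases hcase with
        | inl h => exact ⟨i, hiC, h⟩
        | inr h => exact absurd (hub x (Set.mem_iUnion.mpr ⟨i, h⟩)) (not_le.mpr hx.1)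
      have hclF : IsClosed (⋃ i ∈ C, A1 i) :=
        isClosed_biUnion_finset fun i _ => (hclosed i).1
      have hmem : t ∈ closure (Set.Ioc t 1) := by
        rw [closure_Ioc h1.ne]; exact ⟨le_refl t, ht01.2⟩
      have := closure_mono hsub hmem
      rwa [hclF.closure_eq] at this
  simp only [Set.mem_iUnion] at hF
  obtain ⟨i₁, hiC, hti₁⟩ := hF
  exact ⟨i₁, i₂, Finset.ne_of_mem_erase hiC, t, ht01, hti₁, hti₂⟩
end
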